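/- arXiv:0907.2949 — 3 statements merged into one kernel-verified Lean document; each statement's English description precedes it below -/
import Mathlib

section
/- Let X = {0, 1, …, K} and let Y be the set of 2K+1 intervals { {0}, (0,1), {1}, (1,2), …, {K−1}, (K−1,K), {K} }. The family of functions (f_n : X^n → Y)_{n≥1}, where f_n(x_1, …, x_n) is the unique element of Y containing the average (1/n) Σ_{i=1}^n x_i, is computable. -/
/-- A finite bidirectional connected network on `n` nodes, with port labelings:
each node `i` has a bijection between its neighbors and the port numbers
`{0, …, deg(i) - 1}`. -/
structure PortNetwork (n : ℕ) where
  adj : Fin n → Fin n → Bool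
  symm : ∀ i j, adj i j → adj j i
  loopless : ∀ i, ¬ adj i i
  connected : ∀ i j : Fin n, Relation.ReflTransGen (fun a b => adj a b) i j
  port : ∀ i : Fin n, {j // adj i j} ≃ Fin (Fintype.card {j // adj i j})

/-- The degree of node `i`. -/
def PortNetwork.deg {n : ℕ} (N : PortNetwork n) (i : Fin n) : ℕ :=
  Fintype.card {j // N.adj i j}

/-- An algorithm: a family of transition functions
`A_d : X × Z_d × Y × M^d → Z_d × Y × M^d`, together with the distinguished
initial ("∅") elements of `Z_d`, `Y`, `M`. -/
structure Algorithm (X Y M : Type) (Z : ℕ → Type) where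
  trans : ∀ d : ℕ, X → Z d → Y → (Fin d → M) → Z d × Y × (Fin d → M)
  z0 : ∀ d, Z d
  y0 : Y
  m0 : M

/-- The synchronous evolution of the network: `A.run N x t i` is the state
`(z_i(t), y_i(t), (m_{i,p}(t))_p)` of node `i` at time `t`, starting from
initial values `x`.  At each round, node `i` receives through its `k`-th port
the message sent by the neighbor `j_k` on that port, namely the message that
`j_k` put on its own port leading back to `i`. -/
def Algorithm.run {X Y M : Type} {Z : ℕ → Type} (A : Algorithm X Y M Z) {n : ℕ}
    (N : PortNetwork n) (x : Fin n → X) :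
    ℕ → ∀ i : Fin n, Z (N.deg i) × Y × (Fin (N.deg i) → M)
  | 0 => fun _ => (A.z0 _, A.y0, fun _ => A.m0)
  | t + 1 => fun i =>
      A.trans (N.deg i) (x i) (A.run N x t i).1 (A.run N x t i).2.1
        (fun k =>
          let j := (N.port i).symm k
          (A.run N x t j.1).2.2 (N.port j.1 ⟨i, N.symm _ _ j.2⟩))

/-- `y` is the final output of the execution of `A` on the network `N` with
initial values `x`. -/
def Algorithm.FinalOutput {X Y M : Type} {Z : ℕ → Type} (A : Algorithm X Y M Z) {n : ℕ}
    (N : PortNetwork n) (x : Fin n → X) (y : Y) : Prop :=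
  ∃ t', ∀ t, t' ≤ t → ∀ i, (A.run N x t i).2.1 = y

/-- A family of functions `(f_n : X^n → Y)_{n ≥ 1}` is computable if there is an
algorithm with `Y`, `M` and all `Z_d` finite which, on every connected network
with ports and every input, produces the final output `f_n(x)`. -/
def ComputableFamily {X Y : Type} (f : ∀ n, (Fin n → X) → Y) : Prop :=
  ∃ (M : Type) (Z : ℕ → Type) (A : Algorithm X Y M Z),
    Finite Y ∧ Finite M ∧ (∀ d, Finite (Z d)) ∧
    ∀ n, 0 < n → ∀ (N : PortNetwork n) (x : Fin n → X),
      A.FinalOutput N x (f n x)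

/-- Computability with infinite memory: `Y` and the `Z_d` are allowed to be
countable (the message alphabet `M` stays finite). -/
def ComputableWithInfiniteMemory {X Y : Type} (f : ∀ n, (Fin n → X) → Y) : Prop :=
  ∃ (M : Type) (Z : ℕ → Type) (A : Algorithm X Y M Z),
    Countable Y ∧ Finite M ∧ (∀ d, Countable (Z d)) ∧
    ∀ n, 0 < n → ∀ (N : PortNetwork n) (x : Fin n → X),
      A.FinalOutput N x (f n x)

namespace IA

/-! ## The algorithm.

For each *level* `v ∈ {0,…,K}` we run three token systems:
* side `true` ("P"): mobile `+`-tokens (initially `x i - v` at node `i`) against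
  static `-`-tokens (initially `v - x i`);
* side `false` ("Q"): mobile `-`-tokens (initially `v - x i`) against static
  `+`-tokens (initially `x i - v`);
* balance tokens `⊙` born whenever a cancellation occurs, killed whenever they
  visit a node holding a static token of level `v`.

Mobile tokens are routed hot-potato style by per-class rotors. Eventually the
mobile tokens of exactly one class per level survive and visit every node
infinitely often: side `true` iff `∑ x > n v`, side `false` iff `<`, balance
iff `=`.  Each node remembers the kind of the last level-`v` arrival, and
decodes the vector of kinds into the answer. -/

variable (K : ℕ)

abbrev Lvl := Fin (K+1)
abbrev Cls := Lvl K × Fin 3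
abbrev MsgT := Cls K → Bool
abbrev OutT := Fin (K+1) ⊕ Fin K

/-- internal state: rotors, mobile queues, statics, balance queue, last-kind, init flag -/
abbrev ZT (d : ℕ) : Type :=
  (Cls K → Fin (d+1)) × (Lvl K → Bool → Fin (K+1)) × (Lvl K → Bool → Fin (K+1)) ×
    (Lvl K → Fin (K+1)) × (Lvl K → Fin 3) × Bool

variable {K}

def sideT (s : Bool) : Fin 3 := if s then 0 else 1

def fK (m : ℕ) : Fin (K+1) := ⟨min m K, by omega⟩

@[simp] lemma fK_val {m : ℕ} (h : m ≤ K) : ((fK m : Fin (K+1)) : ℕ) = m := by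
  simp [fK]; omega

def lam0 (x : Fin (K+1)) : Lvl K → Fin 3 := fun v =>
  if (v:ℕ) < (x:ℕ) then 0 else if (v:ℕ) = (x:ℕ) then 2 else 1

def decodeLam (lam : Lvl K → Fin 3) : OutT K :=
  match Fin.find? (fun v => decide (lam v = 2)) with
  | some v => .inl v
  | none =>
    let m := (Finset.univ.filter (fun v => lam v = (0:Fin 3))).card
    if h : m - 1 < K then .inr ⟨m-1, h⟩ else .inl 0

def initZ (d : ℕ) (x : Fin (K+1)) : ZT K d :=
  (fun _ => ⟨0, by omega⟩,
   fun v s => if s then fK ((x:ℕ) - (v:ℕ)) else fK ((v:ℕ) - (x:ℕ)),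
   fun v s => if s then fK ((v:ℕ) - (x:ℕ)) else fK ((x:ℕ) - (v:ℕ)),
   fun _ => fK 0,
   lam0 x,
   true)

section Step
variable {d : ℕ}

/-- number of ports on which a class-`c` token arrives -/
def arrC (ms : Fin d → MsgT K) (c : Cls K) : ℕ :=
  (Finset.univ.filter (fun p => ms p c = true)).card

variable (z : ZT K d) (ms : Fin d → MsgT K)

def cancF (v : Lvl K) (s : Bool) : ℕ := min (arrC ms (v, sideT s)) (z.2.2.1 v s)

def statF (v : Lvl K) (s : Bool) : ℕ := (z.2.2.1 v s : ℕ) - cancF z ms v s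

def birthsF (v : Lvl K) : ℕ := cancF z ms v true + cancF z ms v false

def poolMF (v : Lvl K) (s : Bool) : ℕ :=
  (z.2.1 v s : ℕ) + arrC ms (v, sideT s) - cancF z ms v s

def poolBF (v : Lvl K) : ℕ :=
  if statF z ms v true + statF z ms v false = 0 then
    (z.2.2.2.1 v : ℕ) + arrC ms (v, (2:Fin 3)) + birthsF z ms v
  else 0

def poolF (c : Cls K) : ℕ :=
  if c.2 = (0:Fin 3) then poolMF z ms c.1 true
  else if c.2 = (1:Fin 3) then poolMF z ms c.1 false
  else poolBF z ms c.1

def sentF (c : Cls K) : ℕ := min (poolF z ms c) d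

def lamF (v : Lvl K) : Fin 3 :=
  if 0 < arrC ms (v, (0:Fin 3)) then 0
  else if 0 < arrC ms (v, (1:Fin 3)) then 1
  else if 0 < arrC ms (v, (2:Fin 3)) then 2
  else z.2.2.2.2.1 v

def rotF (c : Cls K) : Fin (d+1) :=
  ⟨((z.1 c : ℕ) + sentF z ms c) % (max d 1),
   by have := Nat.mod_lt ((z.1 c : ℕ) + sentF z ms c) (show 0 < max d 1 by omega); omega⟩

def outF (p : Fin d) (c : Cls K) : Bool :=
  decide ((d + (p:ℕ) - (z.1 c : ℕ)) % d < sentF z ms c)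

def step : ZT K d × OutT K × (Fin d → MsgT K) :=
  ((rotF z ms,
    fun v s => fK (poolMF z ms v s - sentF z ms (v, sideT s)),
    fun v s => fK (statF z ms v s),
    fun v => fK (poolBF z ms v - sentF z ms (v, (2:Fin 3))),
    lamF z ms,
    true),
   decodeLam (lamF z ms),
   fun p c => outF z ms p c)

end Step

variable (K)

def Alg : Algorithm (Fin (K+1)) (OutT K) (MsgT K) (ZT K) where
  trans := fun d x z _y ms => step (if z.2.2.2.2.2 then z else initZ d x) ms
  z0 := fun d => (fun _ => ⟨0, by omega⟩, fun _ _ => fK 0, fun _ _ => fK 0,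
                  fun _ => fK 0, fun _ => 0, false)
  y0 := .inl 0
  m0 := fun _ => false

instance : Finite (MsgT K) := by unfold MsgT; infer_instance
instance : Finite (OutT K) := by unfold OutT; infer_instance
instance (d : ℕ) : Finite (ZT K d) := by unfold ZT; infer_instance

end IA

namespace IA
section Run
variable {K n : ℕ} (N : PortNetwork n) (x : Fin n → Fin (K + 1))

/-- state of node `i` at time `t` -/
abbrev Stt (t : ℕ) (i : Fin n) := (Alg K).run N x t i

def nbrS (i : Fin n) (p : Fin (N.deg i)) : {j // N.adj i j} := (N.port i).symm p

def backp (i : Fin n) (p : Fin (N.deg i)) : Fin (N.deg (nbrS N i p).1) :=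
  N.port (nbrS N i p).1 ⟨i, N.symm _ _ (nbrS N i p).2⟩

/-- messages received by node `i` during round `t → t+1` -/
def arrIn (t : ℕ) (i : Fin n) : Fin (N.deg i) → MsgT K :=
  fun p => (Stt N x t (nbrS N i p).1).2.2 (backp N i p)

/-- the internal state actually used in the step `t → t+1` -/
def effZ (t : ℕ) (i : Fin n) : ZT K (N.deg i) :=
  if (Stt N x t i).1.2.2.2.2.2 = true then (Stt N x t i).1 else initZ (N.deg i) (x i)

set_option maxHeartbeats 1000000 in
lemma run_succ (t : ℕ) (i : Fin n) :
    Stt N x (t+1) i = step (effZ N x t i) (arrIn N x t i) := by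
  show (Alg K).trans _ (x i) (Stt N x t i).1 (Stt N x t i).2.1 (arrIn N x t i) = _
  show step (if (Stt N x t i).1.2.2.2.2.2 = true then (Stt N x t i).1
      else initZ (N.deg i) (x i)) (arrIn N x t i) = _
  rfl

lemma flag_succ (t : ℕ) (i : Fin n) :
    (Stt N x (t+1) i).1.2.2.2.2.2 = true := by
  rw [run_succ]; rfl

lemma effZ_succ (t : ℕ) (i : Fin n) :
    effZ N x (t+1) i = (Stt N x (t+1) i).1 := by
  rw [effZ, if_pos (flag_succ N x t i)]

lemma effZ_zero (i : Fin n) : effZ N x 0 i = initZ (N.deg i) (x i) := by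
  rw [effZ, if_neg]
  show ¬((Alg K).z0 _).2.2.2.2.2 = true
  rw [Alg]
  simp

lemma msg_zero (i : Fin n) (p : Fin (N.deg i)) (c : Cls K) :
    (Stt N x 0 i).2.2 p c = false := rfl

/-! ### ℕ-valued views of the state -/

def mobv (t : ℕ) (i : Fin n) (v : Lvl K) (s : Bool) : ℕ := ((Stt N x t i).1.2.1 v s : ℕ)
def statv (t : ℕ) (i : Fin n) (v : Lvl K) (s : Bool) : ℕ := ((Stt N x t i).1.2.2.1 v s : ℕ)
def balv (t : ℕ) (i : Fin n) (v : Lvl K) : ℕ := ((Stt N x t i).1.2.2.2.1 v : ℕ)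
def lamv (t : ℕ) (i : Fin n) (v : Lvl K) : Fin 3 := (Stt N x t i).1.2.2.2.2.1 v
def rotv (t : ℕ) (i : Fin n) (c : Cls K) : ℕ := ((Stt N x t i).1.1 c : ℕ)
def msgb (t : ℕ) (i : Fin n) (p : Fin (N.deg i)) (c : Cls K) : Bool := (Stt N x t i).2.2 p c
def yv (t : ℕ) (i : Fin n) : OutT K := (Stt N x t i).2.1

/-- effective views (used during step `t → t+1`) -/
def emobv (t : ℕ) (i : Fin n) (v : Lvl K) (s : Bool) : ℕ := ((effZ N x t i).2.1 v s : ℕ)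
def estatv (t : ℕ) (i : Fin n) (v : Lvl K) (s : Bool) : ℕ := ((effZ N x t i).2.2.1 v s : ℕ)
def ebalv (t : ℕ) (i : Fin n) (v : Lvl K) : ℕ := ((effZ N x t i).2.2.2.1 v : ℕ)
def elamv (t : ℕ) (i : Fin n) (v : Lvl K) : Fin 3 := (effZ N x t i).2.2.2.2.1 v
def erotv (t : ℕ) (i : Fin n) (c : Cls K) : ℕ := ((effZ N x t i).1 c : ℕ)

/-! ### step quantities for round `t → t+1` -/

/-- number of class-`c` arrivals at node `i` in round `t → t+1` -/
def acnt (t : ℕ) (i : Fin n) (c : Cls K) : ℕ := arrC (arrIn N x t i) c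
/-- cancellations -/
def Ca (t : ℕ) (i : Fin n) (v : Lvl K) (s : Bool) : ℕ :=
  cancF (effZ N x t i) (arrIn N x t i) v s
def Pm (t : ℕ) (i : Fin n) (v : Lvl K) (s : Bool) : ℕ :=
  poolMF (effZ N x t i) (arrIn N x t i) v s
def Pb (t : ℕ) (i : Fin n) (v : Lvl K) : ℕ :=
  poolBF (effZ N x t i) (arrIn N x t i) v
def Bi (t : ℕ) (i : Fin n) (v : Lvl K) : ℕ :=
  birthsF (effZ N x t i) (arrIn N x t i) v
/-- tokens sent -/
def Sn (t : ℕ) (i : Fin n) (c : Cls K) : ℕ :=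
  sentF (effZ N x t i) (arrIn N x t i) c

lemma acnt_le (t : ℕ) (i : Fin n) (c : Cls K) : acnt N x t i c ≤ N.deg i := by
  classical
  calc (Finset.univ.filter (fun p => arrIn N x t i p c = true)).card
      ≤ (Finset.univ : Finset (Fin (N.deg i))).card := Finset.card_filter_le _ _
    _ = N.deg i := by simp

lemma Ca_le_acnt (t : ℕ) (i : Fin n) (v : Lvl K) (s : Bool) :
    Ca N x t i v s ≤ acnt N x t i (v, sideT s) := Nat.min_le_left _ _

lemma Ca_le_estat (t : ℕ) (i : Fin n) (v : Lvl K) (s : Bool) :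
    Ca N x t i v s ≤ estatv N x t i v s := Nat.min_le_right _ _

lemma Sn_le (t : ℕ) (i : Fin n) (c : Cls K) : Sn N x t i c ≤ N.deg i := Nat.min_le_right _ _

lemma estat_le (t : ℕ) (i : Fin n) (v : Lvl K) (s : Bool) : estatv N x t i v s ≤ K :=
  Nat.lt_succ_iff.mp ((effZ N x t i).2.2.1 v s).isLt

lemma emob_le (t : ℕ) (i : Fin n) (v : Lvl K) (s : Bool) : emobv N x t i v s ≤ K :=
  Nat.lt_succ_iff.mp ((effZ N x t i).2.1 v s).isLt

lemma ebal_le (t : ℕ) (i : Fin n) (v : Lvl K) : ebalv N x t i v ≤ K :=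
  Nat.lt_succ_iff.mp ((effZ N x t i).2.2.2.1 v).isLt

/-! ### step equations -/

lemma Pm_eq (t : ℕ) (i : Fin n) (v : Lvl K) (s : Bool) :
    Pm N x t i v s = emobv N x t i v s + acnt N x t i (v, sideT s) - Ca N x t i v s := rfl

lemma Pb_eq (t : ℕ) (i : Fin n) (v : Lvl K) :
    Pb N x t i v = if (estatv N x t i v true - Ca N x t i v true) +
        (estatv N x t i v false - Ca N x t i v false) = 0 then
      ebalv N x t i v + acnt N x t i (v, (2:Fin 3)) + Bi N x t i v else 0 := rfl

lemma Bi_eq (t : ℕ) (i : Fin n) (v : Lvl K) :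
    Bi N x t i v = Ca N x t i v true + Ca N x t i v false := rfl

lemma Sn_eqM (t : ℕ) (i : Fin n) (v : Lvl K) (s : Bool) :
    Sn N x t i (v, sideT s) = min (Pm N x t i v s) (N.deg i) := by
  cases s <;> rfl

lemma Sn_eqB (t : ℕ) (i : Fin n) (v : Lvl K) :
    Sn N x t i (v, (2:Fin 3)) = min (Pb N x t i v) (N.deg i) := by
  rw [Sn, Pb, sentF, poolF]
  rw [if_neg (show ¬((2:Fin 3) = 0) by decide), if_neg (show ¬((2:Fin 3) = 1) by decide)]

lemma stat_succ (t : ℕ) (i : Fin n) (v : Lvl K) (s : Bool) :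
    statv N x (t+1) i v s = estatv N x t i v s - Ca N x t i v s := by
  have h : statv N x (t+1) i v s =
      ((fK (estatv N x t i v s - Ca N x t i v s) : Fin (K+1)) : ℕ) := by
    rw [statv, run_succ]; rfl
  rw [h, fK_val]
  exact le_trans (Nat.sub_le _ _) (estat_le N x t i v s)

lemma mob_succ (t : ℕ) (i : Fin n) (v : Lvl K) (s : Bool) :
    mobv N x (t+1) i v s = Pm N x t i v s - Sn N x t i (v, sideT s) := by
  have hb : Pm N x t i v s - Sn N x t i (v, sideT s) ≤ K := by
    have h1 : Ca N x t i v s ≤ acnt N x t i (v, sideT s) := Ca_le_acnt N x t i v s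
    have h2 : acnt N x t i (v, sideT s) ≤ N.deg i := acnt_le N x t i _
    have h3 : emobv N x t i v s ≤ K := emob_le N x t i v s
    rw [Pm_eq, Sn_eqM, Pm_eq]
    omega
  have h : mobv N x (t+1) i v s =
      ((fK (Pm N x t i v s - Sn N x t i (v, sideT s)) : Fin (K+1)) : ℕ) := by
    rw [mobv, run_succ]
    cases s <;> rfl
  rw [h, fK_val hb]

lemma bal_succ_min (t : ℕ) (i : Fin n) (v : Lvl K) :
    balv N x (t+1) i v = min (Pb N x t i v - Sn N x t i (v, (2:Fin 3))) K := by
  have h : balv N x (t+1) i v =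
      ((fK (Pb N x t i v - Sn N x t i (v, (2:Fin 3))) : Fin (K+1)) : ℕ) := by
    rw [balv, run_succ]; rfl
  rw [h]; rfl

lemma lam_succ (t : ℕ) (i : Fin n) (v : Lvl K) :
    lamv N x (t+1) i v =
      if 0 < acnt N x t i (v, (0:Fin 3)) then 0
      else if 0 < acnt N x t i (v, (1:Fin 3)) then 1
      else if 0 < acnt N x t i (v, (2:Fin 3)) then 2
      else elamv N x t i v := by
  rw [lamv, run_succ]; rfl

lemma y_succ (t : ℕ) (i : Fin n) :
    yv N x (t+1) i = decodeLam (fun v => lamv N x (t+1) i v) := by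
  have h1 : yv N x (t+1) i = decodeLam (lamF (effZ N x t i) (arrIn N x t i)) := by
    rw [yv, run_succ]; rfl
  have h2 : (fun v => lamv N x (t+1) i v) = lamF (effZ N x t i) (arrIn N x t i) := by
    funext v; rw [lamv, run_succ]; rfl
  rw [h1, h2]

lemma rot_succ (t : ℕ) (i : Fin n) (c : Cls K) :
    rotv N x (t+1) i c = (erotv N x t i c + Sn N x t i c) % (max (N.deg i) 1) := by
  rw [rotv, run_succ]; rfl

lemma msg_succ (t : ℕ) (i : Fin n) (p : Fin (N.deg i)) (c : Cls K) :
    msgb N x (t+1) i p c =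
      decide ((N.deg i + (p:ℕ) - erotv N x t i c) % (N.deg i) < Sn N x t i c) := by
  rw [msgb, run_succ]; rfl

end Run
end IA

namespace IA

/-! ### the rotor-window cardinality lemma -/

lemma window_mem_iff {d r s j : ℕ} (hr : r < d) (hs : s ≤ d) (hj : j < s) :
    (d + (r + j) % d - r) % d = j := by
  rcases Nat.lt_or_ge (r + j) d with h | h
  · rw [Nat.mod_eq_of_lt h]
    have : d + (r + j) - r = d + j := by omega
    rw [this, Nat.add_mod_left, Nat.mod_eq_of_lt (by omega)]
  · have h2 : (r + j) % d = r + j - d := by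
      rw [Nat.mod_eq_sub_mod h, Nat.mod_eq_of_lt (by omega)]
    rw [h2]
    have : d + (r + j - d) - r = j := by omega
    rw [this, Nat.mod_eq_of_lt (by omega)]

lemma card_window (d r s : ℕ) (hr : r < max d 1) (hs : s ≤ d) :
    (Finset.univ.filter (fun p : Fin d => (d + (p:ℕ) - r) % d < s)).card = s := by
  rcases Nat.eq_zero_or_pos d with rfl | hd
  · simp; omega
  have hr' : r < d := by omega
  classical
  have hinv : ∀ p : Fin d, (r + ((d + (p:ℕ) - r) % d)) % d = (p:ℕ) := by
    intro p
    rw [Nat.add_mod_mod]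
    have : r + (d + (p:ℕ) - r) = d + (p:ℕ) := by omega
    rw [this, Nat.add_mod_left, Nat.mod_eq_of_lt p.isLt]
  have himg : (Finset.univ.filter (fun p : Fin d => (d + (p:ℕ) - r) % d < s)) =
      (Finset.range s).image (fun j => (⟨(r + j) % d, Nat.mod_lt _ hd⟩ : Fin d)) := by
    ext p
    simp only [Finset.mem_filter, Finset.mem_univ, true_and, Finset.mem_image,
      Finset.mem_range]
    constructor
    · intro hp
      refine ⟨(d + (p:ℕ) - r) % d, hp, ?_⟩
      apply Fin.ext
      exact hinv p
    · rintro ⟨j, hj, rfl⟩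
      exact le_of_eq (window_mem_iff hr' hs hj) |>.trans_lt hj
  rw [himg, Finset.card_image_of_injOn, Finset.card_range]
  intro j1 h1 j2 h2 he
  simp only [Finset.mem_coe, Finset.mem_range] at h1 h2
  have e1 := window_mem_iff hr' hs h1
  have e2 := window_mem_iff hr' hs h2
  have : ((r + j1) % d) = ((r + j2) % d) := congrArg Fin.val he
  rw [← e1, ← e2, this]

section Run
variable {K n : ℕ} (N : PortNetwork n) (x : Fin n → Fin (K + 1))

/-! ### values at time 1 (after the initialization step) -/

lemma arrIn_zero (i : Fin n) (p : Fin (N.deg i)) (c : Cls K) :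
    arrIn N x 0 i p c = false := rfl

lemma acnt_zero (i : Fin n) (c : Cls K) : acnt N x 0 i c = 0 := by
  rw [acnt, arrC]
  simp [arrIn_zero]

lemma Ca_zero (i : Fin n) (v : Lvl K) (s : Bool) : Ca N x 0 i v s = 0 := by
  have : Ca N x 0 i v s ≤ acnt N x 0 i (v, sideT s) := Ca_le_acnt N x 0 i v s
  rw [acnt_zero] at this
  omega

def mob0 (x : Fin (K+1)) (v : Lvl K) (s : Bool) : ℕ :=
  if s then (x:ℕ) - (v:ℕ) else (v:ℕ) - (x:ℕ)

def stat0 (x : Fin (K+1)) (v : Lvl K) (s : Bool) : ℕ :=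
  if s then (v:ℕ) - (x:ℕ) else (x:ℕ) - (v:ℕ)

lemma mob0_le (x : Fin (K+1)) (v : Lvl K) (s : Bool) : mob0 x v s ≤ K := by
  have h1 := x.isLt; have h2 := v.isLt
  cases s <;> simp [mob0] <;> omega

lemma stat0_le (x : Fin (K+1)) (v : Lvl K) (s : Bool) : stat0 x v s ≤ K := by
  have h1 := x.isLt; have h2 := v.isLt
  cases s <;> simp [stat0] <;> omega

lemma emob_zero (i : Fin n) (v : Lvl K) (s : Bool) :
    emobv N x 0 i v s = mob0 (x i) v s := by
  rw [emobv, effZ_zero]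
  have h1 := (x i).isLt; have h2 := v.isLt
  cases s <;> (simp only [initZ, mob0, if_true, if_false, Bool.false_eq_true]; exact fK_val (by omega))

lemma estat_zero (i : Fin n) (v : Lvl K) (s : Bool) :
    estatv N x 0 i v s = stat0 (x i) v s := by
  rw [estatv, effZ_zero]
  have h1 := (x i).isLt; have h2 := v.isLt
  cases s <;> (simp only [initZ, stat0, if_true, if_false, Bool.false_eq_true]; exact fK_val (by omega))

lemma ebal_zero (i : Fin n) (v : Lvl K) : ebalv N x 0 i v = 0 := by
  rw [ebalv, effZ_zero]
  simp [initZ, fK]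

lemma elam_zero (i : Fin n) (v : Lvl K) : elamv N x 0 i v = lam0 (x i) v := by
  rw [elamv, effZ_zero]
  rfl

lemma erot_zero (i : Fin n) (c : Cls K) : erotv N x 0 i c = 0 := by
  rw [erotv, effZ_zero]
  rfl

lemma stat_one (i : Fin n) (v : Lvl K) (s : Bool) :
    statv N x 1 i v s = stat0 (x i) v s := by
  rw [show (1:ℕ) = 0 + 1 from rfl, stat_succ, Ca_zero, estat_zero]
  omega

lemma Pm_zero (i : Fin n) (v : Lvl K) (s : Bool) :
    Pm N x 0 i v s = mob0 (x i) v s := by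
  rw [Pm_eq, acnt_zero, Ca_zero, emob_zero]
  omega

lemma Pb_zero (i : Fin n) (v : Lvl K) : Pb N x 0 i v = 0 := by
  rw [Pb_eq, acnt_zero, ebal_zero]
  have : Bi N x 0 i v = 0 := by rw [Bi_eq, Ca_zero, Ca_zero]
  rw [this]
  simp

lemma lam_one (i : Fin n) (v : Lvl K) : lamv N x 1 i v = lam0 (x i) v := by
  rw [show (1:ℕ) = 0 + 1 from rfl, lam_succ]
  simp [acnt_zero, elam_zero]

/-! ### the balance-capacity invariant and the exact balance step equation -/

lemma einv (t : ℕ) (i : Fin n) (v : Lvl K) :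
    ebalv N x t i v + (estatv N x t i v true + estatv N x t i v false) ≤ K := by
  induction t with
  | zero =>
    rw [ebal_zero, estat_zero, estat_zero]
    have h1 := (x i).isLt; have h2 := v.isLt
    simp [stat0]; omega
  | succ t ih =>
    have hb : ebalv N x (t+1) i v = balv N x (t+1) i v := by
      rw [ebalv, balv, effZ_succ]
    have hs : ∀ s, estatv N x (t+1) i v s = statv N x (t+1) i v s := by
      intro s; rw [estatv, statv, effZ_succ]
    rw [hb, hs, hs, bal_succ_min, stat_succ, stat_succ]
    have hPb : Pb N x t i v ≤ ebalv N x t i v + acnt N x t i (v, (2:Fin 3)) + Bi N x t i v := by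
      rw [Pb_eq]
      split <;> omega
    have hBi : Bi N x t i v = Ca N x t i v true + Ca N x t i v false := Bi_eq N x t i v
    have h1 : Ca N x t i v true ≤ estatv N x t i v true := Ca_le_estat N x t i v true
    have h2 : Ca N x t i v false ≤ estatv N x t i v false := Ca_le_estat N x t i v false
    have haB : acnt N x t i (v, (2:Fin 3)) ≤ N.deg i := acnt_le N x t i _
    have hSn : Sn N x t i (v, (2:Fin 3)) = min (Pb N x t i v) (N.deg i) := Sn_eqB N x t i v
    have hK : min (Pb N x t i v - Sn N x t i (v, (2:Fin 3))) K ≤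
        Pb N x t i v - Sn N x t i (v, (2:Fin 3)) := Nat.min_le_left _ _
    omega

lemma bal_succ (t : ℕ) (i : Fin n) (v : Lvl K) :
    balv N x (t+1) i v = Pb N x t i v - Sn N x t i (v, (2:Fin 3)) := by
  rw [bal_succ_min]
  have hPb : Pb N x t i v ≤ ebalv N x t i v + acnt N x t i (v, (2:Fin 3)) + Bi N x t i v := by
    rw [Pb_eq]; split <;> omega
  have hBi : Bi N x t i v = Ca N x t i v true + Ca N x t i v false := Bi_eq N x t i v
  have h1 : Ca N x t i v true ≤ estatv N x t i v true := Ca_le_estat N x t i v true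
  have h2 : Ca N x t i v false ≤ estatv N x t i v false := Ca_le_estat N x t i v false
  have haB : acnt N x t i (v, (2:Fin 3)) ≤ N.deg i := acnt_le N x t i _
  have hSn : Sn N x t i (v, (2:Fin 3)) = min (Pb N x t i v) (N.deg i) := Sn_eqB N x t i v
  have he := einv N x t i v
  omega

lemma bal_one (i : Fin n) (v : Lvl K) : balv N x 1 i v = 0 := by
  rw [show (1:ℕ) = 0 + 1 from rfl, bal_succ, Pb_zero]
  omega

/-! ### rotor bounds and the sent-cardinality lemma -/

lemma erot_lt (t : ℕ) (i : Fin n) (c : Cls K) :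
    erotv N x t i c < max (N.deg i) 1 := by
  cases t with
  | zero => rw [erot_zero]; omega
  | succ t =>
    have h : erotv N x (t+1) i c = rotv N x (t+1) i c := by
      rw [erotv, rotv, effZ_succ]
    rw [h, rot_succ]
    exact Nat.mod_lt _ (by omega)

lemma sent_card (t : ℕ) (i : Fin n) (c : Cls K) :
    (Finset.univ.filter (fun p => msgb N x (t+1) i p c = true)).card = Sn N x t i c := by
  classical
  have : (Finset.univ.filter (fun p => msgb N x (t+1) i p c = true)) =
      (Finset.univ.filter
        (fun p : Fin (N.deg i) => (N.deg i + (p:ℕ) - erotv N x t i c) % (N.deg i) < Sn N x t i c)) := by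
    apply Finset.filter_congr
    intro p _
    rw [msg_succ]
    simp
  rw [this, card_window _ _ _ (erot_lt N x t i c) (Sn_le N x t i c)]

end Run
end IA

namespace IA
section Run
variable {K n : ℕ} (N : PortNetwork n) (x : Fin n → Fin (K + 1))

/-! ### the edge flip involution -/

def flipS (e : Σ i : Fin n, Fin (N.deg i)) : Σ i : Fin n, Fin (N.deg i) :=
  ⟨(nbrS N e.1 e.2).1, backp N e.1 e.2⟩

lemma flipS_flipS (e : Σ i : Fin n, Fin (N.deg i)) : flipS N (flipS N e) = e := by
  rcases e with ⟨i, p⟩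
  show (⟨(nbrS N (nbrS N i p).1 (backp N i p)).1,
      backp N (nbrS N i p).1 (backp N i p)⟩ : Σ i : Fin n, Fin (N.deg i)) = ⟨i, p⟩
  show (⟨((N.port (nbrS N i p).1).symm (backp N i p)).1,
      N.port ((N.port (nbrS N i p).1).symm (backp N i p)).1
        ⟨(nbrS N i p).1, N.symm _ _ ((N.port (nbrS N i p).1).symm (backp N i p)).2⟩⟩ :
      Σ i : Fin n, Fin (N.deg i)) = ⟨i, p⟩
  have hw : (N.port (nbrS N i p).1).symm (backp N i p) =
      ⟨i, N.symm _ _ (nbrS N i p).2⟩ := by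
    rw [backp]
    exact Equiv.symm_apply_apply _ _
  rw [hw]
  have h3 : ∀ (h : N.adj i ((nbrS N i p).1) = true),
      N.port i ⟨(nbrS N i p).1, h⟩ = p := by
    intro h
    rw [show (⟨(nbrS N i p).1, h⟩ : {k // N.adj i k}) = (N.port i).symm p from
      Subtype.ext rfl]
    exact Equiv.apply_symm_apply _ _
  exact congrArg (Sigma.mk i) (h3 _)

def flipEq : (Σ i : Fin n, Fin (N.deg i)) ≃ (Σ i : Fin n, Fin (N.deg i)) :=
  ⟨flipS N, flipS N, flipS_flipS N, flipS_flipS N⟩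

lemma arrIn_flip (t : ℕ) (e : Σ i : Fin n, Fin (N.deg i)) (c : Cls K) :
    arrIn N x t e.1 e.2 c = msgb N x t (flipS N e).1 (flipS N e).2 c := rfl

/-! ### global sums -/

def FlT (t : ℕ) (c : Cls K) : ℕ :=
  ∑ i, (Finset.univ.filter (fun p => msgb N x t i p c = true)).card
def AmT (t : ℕ) (c : Cls K) : ℕ := ∑ i, acnt N x t i c
def EStT (t : ℕ) (v : Lvl K) (s : Bool) : ℕ := ∑ i, estatv N x t i v s
def CaT (t : ℕ) (v : Lvl K) (s : Bool) : ℕ := ∑ i, Ca N x t i v s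
def AlM (t : ℕ) (v : Lvl K) (s : Bool) : ℕ :=
  (∑ i, emobv N x t i v s) + FlT N x t (v, sideT s)
def AlB (t : ℕ) (v : Lvl K) : ℕ :=
  (∑ i, ebalv N x t i v) + FlT N x t (v, (2:Fin 3))
def MT0 (v : Lvl K) (s : Bool) : ℕ := ∑ i, mob0 (x i) v s
def ST0 (v : Lvl K) (s : Bool) : ℕ := ∑ i, stat0 (x i) v s

lemma AmT_eq_FlT (t : ℕ) (c : Cls K) : AmT N x t c = FlT N x t c := by
  classical
  have h1 : AmT N x t c = ∑ e : Σ i : Fin n, Fin (N.deg i),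
      (if arrIn N x t e.1 e.2 c = true then 1 else 0) := by
    rw [AmT, ← Finset.univ_sigma_univ, Finset.sum_sigma]
    congr 1; funext i
    rw [acnt, arrC, Finset.card_filter]
  have h2 : FlT N x t c = ∑ e : Σ i : Fin n, Fin (N.deg i),
      (if msgb N x t e.1 e.2 c = true then 1 else 0) := by
    rw [FlT, ← Finset.univ_sigma_univ, Finset.sum_sigma]
    congr 1; funext i
    rw [Finset.card_filter]
  rw [h1, h2]
  rw [← Equiv.sum_comp (flipEq N)
    (fun e' : Σ i : Fin n, Fin (N.deg i) =>
      if msgb N x t e'.1 e'.2 c = true then (1:ℕ) else 0)]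
  exact Finset.sum_congr rfl (fun e _ => rfl)

lemma msgb_zero (i : Fin n) (p : Fin (N.deg i)) (c : Cls K) :
    msgb N x 0 i p c = false := rfl

lemma FlT_zero (c : Cls K) : FlT N x 0 c = 0 := by
  rw [FlT]
  refine Finset.sum_eq_zero fun i _ => ?_
  rw [Finset.card_eq_zero]
  refine Finset.filter_false_of_mem fun p _ => ?_
  simp [msgb_zero]

lemma acnt_le_FlT (t : ℕ) (i : Fin n) (c : Cls K) : acnt N x t i c ≤ FlT N x t c := by
  rw [← AmT_eq_FlT, AmT]
  exact Finset.single_le_sum (f := fun i => acnt N x t i c)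
    (fun _ _ => Nat.zero_le _) (Finset.mem_univ i)

/-! ### global step identities -/

lemma EStT_succ (t : ℕ) (v : Lvl K) (s : Bool) :
    EStT N x (t+1) v s = EStT N x t v s - CaT N x t v s ∧
      CaT N x t v s ≤ EStT N x t v s := by
  have hpt : ∀ i, estatv N x (t+1) i v s = estatv N x t i v s - Ca N x t i v s := by
    intro i
    rw [estatv, effZ_succ, ← statv, stat_succ]
  constructor
  · rw [EStT, EStT, CaT, Finset.sum_congr rfl (fun i _ => hpt i)]
    rw [Finset.sum_tsub_distrib]
    intro i _
    exact Ca_le_estat N x t i v s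
  · rw [EStT, CaT]
    exact Finset.sum_le_sum (fun i _ => Ca_le_estat N x t i v s)

lemma AlM_succ (t : ℕ) (v : Lvl K) (s : Bool) :
    AlM N x (t+1) v s = AlM N x t v s - CaT N x t v s ∧
      CaT N x t v s ≤ AlM N x t v s := by
  have hmob : ∀ i, emobv N x (t+1) i v s
      = Pm N x t i v s - Sn N x t i (v, sideT s) := by
    intro i
    rw [emobv, effZ_succ, ← mobv, mob_succ]
  have hsn : ∀ i, Sn N x t i (v, sideT s) ≤ Pm N x t i v s := by
    intro i
    rw [Sn_eqM]; exact Nat.min_le_left _ _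
  have hfl : FlT N x (t+1) (v, sideT s) = ∑ i, Sn N x t i (v, sideT s) := by
    rw [FlT]
    exact Finset.sum_congr rfl (fun i _ => sent_card N x t i _)
  have hsum : AlM N x (t+1) v s = ∑ i, Pm N x t i v s := by
    rw [AlM, hfl, Finset.sum_congr rfl (fun i _ => hmob i), ← Finset.sum_add_distrib]
    apply Finset.sum_congr rfl
    intro i _
    have := hsn i
    omega
  have hPm : ∀ i, Pm N x t i v s + Ca N x t i v s
      = emobv N x t i v s + acnt N x t i (v, sideT s) := by
    intro i
    rw [Pm_eq]
    have h1 := Ca_le_acnt N x t i v s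
    omega
  have htot : (∑ i, Pm N x t i v s) + CaT N x t v s = AlM N x t v s := by
    rw [CaT, ← Finset.sum_add_distrib, Finset.sum_congr rfl (fun i _ => hPm i),
      Finset.sum_add_distrib, AlM, ← AmT_eq_FlT, AmT]
  constructor
  · omega
  · omega

lemma AlB_succ (t : ℕ) (v : Lvl K) :
    AlB N x (t+1) v = ∑ i, Pb N x t i v := by
  have hbal : ∀ i, ebalv N x (t+1) i v = Pb N x t i v - Sn N x t i (v, (2:Fin 3)) := by
    intro i
    rw [ebalv, effZ_succ, ← balv, bal_succ]
  have hsn : ∀ i, Sn N x t i (v, (2:Fin 3)) ≤ Pb N x t i v := by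
    intro i
    rw [Sn_eqB]; exact Nat.min_le_left _ _
  have hfl : FlT N x (t+1) (v, (2:Fin 3)) = ∑ i, Sn N x t i (v, (2:Fin 3)) := by
    rw [FlT]
    exact Finset.sum_congr rfl (fun i _ => sent_card N x t i _)
  rw [AlB, hfl, Finset.sum_congr rfl (fun i _ => hbal i), ← Finset.sum_add_distrib]
  apply Finset.sum_congr rfl
  intro i _
  have := hsn i
  omega

/-! ### conservation -/

lemma EStT_zero (v : Lvl K) (s : Bool) : EStT N x 0 v s = ST0 x v s := by
  rw [EStT, ST0]
  exact Finset.sum_congr rfl (fun i _ => estat_zero N x i v s)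

lemma AlM_zero (v : Lvl K) (s : Bool) : AlM N x 0 v s = MT0 x v s := by
  rw [AlM, FlT_zero, MT0]
  rw [Finset.sum_congr rfl (fun i _ => emob_zero N x i v s)]
  omega

lemma AlB_zero (v : Lvl K) : AlB N x 0 v = 0 := by
  rw [AlB, FlT_zero]
  simp [ebal_zero]

lemma consM (t : ℕ) (v : Lvl K) (s : Bool) :
    AlM N x t v s + ST0 x v s = MT0 x v s + EStT N x t v s := by
  induction t with
  | zero => rw [AlM_zero, EStT_zero]
  | succ t ih =>
    obtain ⟨h1, h2⟩ := EStT_succ N x t v s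
    obtain ⟨h3, h4⟩ := AlM_succ N x t v s
    omega

lemma AlM_antitone (t : ℕ) (v : Lvl K) (s : Bool) : AlM N x (t+1) v s ≤ AlM N x t v s := by
  obtain ⟨h1, h2⟩ := AlM_succ N x t v s
  omega

lemma EStT_antitone (t : ℕ) (v : Lvl K) (s : Bool) : EStT N x (t+1) v s ≤ EStT N x t v s := by
  obtain ⟨h1, h2⟩ := EStT_succ N x t v s
  omega

end Run
end IA

namespace IA

/-- a bounded-monotone sequence that is eventually periodic is eventually constant -/
lemma nat_orbit_const (f : ℕ → ℕ) (T p : ℕ) (hp : 0 < p)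
    (hstep : ∀ t, T ≤ t → f (t+1) ≤ f t)
    (hper : ∀ t, T ≤ t → f (t+p) = f t) :
    ∀ t, T ≤ t → f (t+1) = f t := by
  intro t ht
  have chain : ∀ k, f (t + 1 + k) ≤ f (t + 1) := by
    intro k
    induction k with
    | zero => simp
    | succ k ih =>
      have hs := hstep (t + 1 + k) (by omega)
      have he : t + 1 + (k+1) = (t + 1 + k) + 1 := by omega
      rw [he]
      exact le_trans hs ih
  have h1 : f (t + p) ≤ f (t + 1) := by
    have := chain (p - 1)
    have he : t + 1 + (p - 1) = t + p := by omega
    rwa [he] at this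
  have h2 := hstep t ht
  have h3 := hper t ht
  omega

section Run
variable {K n : ℕ} (N : PortNetwork n) (x : Fin n → Fin (K + 1))

/-- the global configuration -/
def RR (t : ℕ) : ∀ i : Fin n, ZT K (N.deg i) × OutT K × (Fin (N.deg i) → MsgT K) :=
  fun i => Stt N x t i

lemma RR_succ (t : ℕ) :
    RR N x (t+1) = (fun i => (Alg K).trans _ (x i) ((RR N x t) i).1 ((RR N x t) i).2.1
      (fun k => ((RR N x t) ((N.port i).symm k).1).2.2
        (N.port _ ⟨i, N.symm _ _ ((N.port i).symm k).2⟩))) := rfl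

lemma exists_period :
    ∃ T p, 0 < p ∧ ∀ t, T ≤ t → RR N x (t + p) = RR N x t := by
  have main : ∀ a b, a < b → RR N x a = RR N x b →
      ∃ T p, 0 < p ∧ ∀ t, T ≤ t → RR N x (t + p) = RR N x t := by
    intro a b hab heq
    refine ⟨a, b - a, by omega, ?_⟩
    intro t ht
    induction t, ht using Nat.le_induction with
    | base =>
      have : a + (b - a) = b := by omega
      rw [this, heq]
    | succ t ht ih =>
      have h1 : t + 1 + (b - a) = (t + (b - a)) + 1 := by omega
      rw [h1, RR_succ, RR_succ, ih]
  have : ∃ a b : ℕ, a ≠ b ∧ RR N x a = RR N x b :=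
    Finite.exists_ne_map_eq_of_infinite (RR N x)
  obtain ⟨a, b, hab, heq⟩ := this
  rcases Nat.lt_or_ge a b with h | h
  · exact main a b h heq
  · exact main b a (by omega) heq.symm

section Orbit
variable (T p : ℕ) (hp : 0 < p) (hper : ∀ t, T ≤ t → RR N x (t + p) = RR N x t)

include hper in
lemma Stt_per (t : ℕ) (ht : T ≤ t) (i : Fin n) : Stt N x (t + p) i = Stt N x t i :=
  congrFun (hper t ht) i

include hper in
lemma arrIn_per (t : ℕ) (ht : T ≤ t) (i : Fin n) :
    arrIn N x (t + p) i = arrIn N x t i := by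
  funext q
  rw [arrIn, arrIn, Stt_per N x T p hper t ht]

include hper in
lemma effZ_per (t : ℕ) (ht : T ≤ t) (i : Fin n) :
    effZ N x (t + p) i = effZ N x t i := by
  rw [effZ, effZ, Stt_per N x T p hper t ht]

include hper in
lemma acnt_per (t : ℕ) (ht : T ≤ t) (i : Fin n) (c : Cls K) :
    acnt N x (t + p) i c = acnt N x t i c := by
  rw [acnt, acnt, arrIn_per N x T p hper t ht]

include hper in
lemma EStT_per (t : ℕ) (ht : T ≤ t) (v : Lvl K) (s : Bool) :
    EStT N x (t + p) v s = EStT N x t v s := by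
  rw [EStT, EStT]
  exact Finset.sum_congr rfl fun i _ => by
    rw [estatv, estatv, effZ_per N x T p hper t ht]

include hper in
lemma AlM_per (t : ℕ) (ht : T ≤ t) (v : Lvl K) (s : Bool) :
    AlM N x (t + p) v s = AlM N x t v s := by
  rw [AlM, AlM, FlT, FlT]
  have h1 : ∀ i, emobv N x (t+p) i v s = emobv N x t i v s := fun i => by
    rw [emobv, emobv, effZ_per N x T p hper t ht]
  have h2 : ∀ i, (Finset.univ.filter (fun q => msgb N x (t+p) i q (v, sideT s) = true)).card
      = (Finset.univ.filter (fun q => msgb N x t i q (v, sideT s) = true)).card := fun i => by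
    congr 1
    apply Finset.filter_congr
    intro q _
    rw [msgb, msgb, Stt_per N x T p hper t ht]
  rw [Finset.sum_congr rfl fun i _ => h1 i, Finset.sum_congr rfl fun i _ => h2 i]

include hper in
lemma AlB_per (t : ℕ) (ht : T ≤ t) (v : Lvl K) :
    AlB N x (t + p) v = AlB N x t v := by
  rw [AlB, AlB, FlT, FlT]
  have h1 : ∀ i, ebalv N x (t+p) i v = ebalv N x t i v := fun i => by
    rw [ebalv, ebalv, effZ_per N x T p hper t ht]
  have h2 : ∀ i, (Finset.univ.filter (fun q => msgb N x (t+p) i q (v, (2:Fin 3)) = true)).card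
      = (Finset.univ.filter (fun q => msgb N x t i q (v, (2:Fin 3)) = true)).card := fun i => by
    congr 1
    apply Finset.filter_congr
    intro q _
    rw [msgb, msgb, Stt_per N x T p hper t ht]
  rw [Finset.sum_congr rfl fun i _ => h1 i, Finset.sum_congr rfl fun i _ => h2 i]

/-! ### on-orbit constancy -/

include hp hper in
lemma CaT_orbit (t : ℕ) (ht : T ≤ t) (v : Lvl K) (s : Bool) : CaT N x t v s = 0 := by
  have hconst := nat_orbit_const (fun t => EStT N x t v s) T p hp
    (fun t _ => EStT_antitone N x t v s)
    (fun t ht => EStT_per N x T p hper t ht v s) t ht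
  obtain ⟨h1, h2⟩ := EStT_succ N x t v s
  omega

include hp hper in
lemma Ca_orbit (t : ℕ) (ht : T ≤ t) (i : Fin n) (v : Lvl K) (s : Bool) :
    Ca N x t i v s = 0 := by
  have h := CaT_orbit N x T p hp hper t ht v s
  rw [CaT] at h
  exact (Finset.sum_eq_zero_iff.mp h) i (Finset.mem_univ i)

include hp hper in
lemma Bi_orbit (t : ℕ) (ht : T ≤ t) (i : Fin n) (v : Lvl K) : Bi N x t i v = 0 := by
  rw [Bi_eq, Ca_orbit N x T p hp hper t ht, Ca_orbit N x T p hp hper t ht]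

include hp hper in
lemma AlM_orbit (t : ℕ) (ht : T ≤ t) (v : Lvl K) (s : Bool) :
    AlM N x (t+1) v s = AlM N x t v s := by
  obtain ⟨h1, h2⟩ := AlM_succ N x t v s
  have := CaT_orbit N x T p hp hper t ht v s
  omega

include hp hper in
lemma AlB_hstep (t : ℕ) (ht : T ≤ t) (v : Lvl K) :
    AlB N x (t+1) v ≤ AlB N x t v ∧
      (AlB N x (t+1) v = AlB N x t v →
        ∀ i, Pb N x t i v = ebalv N x t i v + acnt N x t i (v, (2:Fin 3))) := by
  have hPb : ∀ i, Pb N x t i v ≤ ebalv N x t i v + acnt N x t i (v, (2:Fin 3)) := by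
    intro i
    rw [Pb_eq]
    have := Bi_orbit N x T p hp hper t ht i v
    split <;> omega
  have hsum : AlB N x (t+1) v = ∑ i, Pb N x t i v := AlB_succ N x t v
  have hup : AlB N x t v = ∑ i, (ebalv N x t i v + acnt N x t i (v, (2:Fin 3))) := by
    rw [AlB, ← AmT_eq_FlT, AmT, Finset.sum_add_distrib]
  constructor
  · rw [hsum, hup]
    exact Finset.sum_le_sum fun i _ => hPb i
  · intro heq
    rw [hsum, hup] at heq
    have hall := (Finset.sum_eq_sum_iff_of_le (s := (Finset.univ : Finset (Fin n)))
      (f := fun i => Pb N x t i v)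
      (g := fun i => ebalv N x t i v + acnt N x t i (v, (2:Fin 3)))
      (fun i _ => hPb i)).mp heq
    intro i
    exact hall i (Finset.mem_univ i)

include hp hper in
lemma AlB_orbit (t : ℕ) (ht : T ≤ t) (v : Lvl K) :
    AlB N x (t+1) v = AlB N x t v := by
  exact nat_orbit_const (fun t' => AlB N x t' v) T p hp
    (fun t' ht' => (AlB_hstep N x T p hp hper t' ht' v).1)
    (fun t' ht' => AlB_per N x T p hper t' ht' v) t ht

include hp hper in
lemma Pb_orbit (t : ℕ) (ht : T ≤ t) (i : Fin n) (v : Lvl K) :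
    Pb N x t i v = ebalv N x t i v + acnt N x t i (v, (2:Fin 3)) :=
  (AlB_hstep N x T p hp hper t ht v).2 (AlB_orbit N x T p hp hper t ht v) i

include hp hper in
lemma stat_orbit_const (t : ℕ) (ht : T ≤ t) (ht1 : 1 ≤ t) (i : Fin n) (v : Lvl K) (s : Bool) :
    ∀ t', t ≤ t' → statv N x t' i v s = statv N x t i v s := by
  intro t' ht'
  induction t', ht' using Nat.le_induction with
  | base => rfl
  | succ t' ht' ih =>
    have h1 : statv N x (t'+1) i v s = estatv N x t' i v s - Ca N x t' i v s :=
      stat_succ N x t' i v s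
    have h2 : Ca N x t' i v s = 0 := Ca_orbit N x T p hp hper t' (by omega) i v s
    have h3 : estatv N x t' i v s = statv N x t' i v s := by
      have : ∃ u, t' = u + 1 := ⟨t' - 1, by omega⟩
      obtain ⟨u, rfl⟩ := this
      rw [estatv, statv, effZ_succ]
    omega

end Orbit
end Run
end IA

namespace IA

lemma mod_inv_lemma {d r q : ℕ} (hr : r < d) (hq : q < d) :
    (r + (d + q - r) % d) % d = q := by
  rw [Nat.add_mod_mod]
  have h : r + (d + q - r) = d + q := by omega
  rw [h, Nat.add_mod_left, Nat.mod_eq_of_lt hq]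

lemma mod_cancel_lemma {d r S : ℕ} (hr : r < d) (h : (r + S) % d = r) : S % d = 0 := by
  have hd : 0 < d := by omega
  have h1 : (r + S % d) % d = r := by rw [Nat.add_mod_mod]; exact h
  have h2 : S % d < d := Nat.mod_lt _ hd
  rcases Nat.lt_or_ge (r + S % d) d with hc | hc
  · rw [Nat.mod_eq_of_lt hc] at h1
    omega
  · rw [Nat.mod_eq_sub_mod hc, Nat.mod_eq_of_lt (by omega)] at h1
    omega

lemma interval_find (C : ℕ → ℕ) (mono : ∀ j, C j ≤ C (j+1)) :
    ∀ (P m : ℕ), C 0 ≤ m → m < C P → ∃ j, j < P ∧ C j ≤ m ∧ m < C (j+1) := by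
  intro P
  induction P with
  | zero => intro m h1 h2; omega
  | succ P ih =>
    intro m h1 h2
    rcases Nat.lt_or_ge m (C P) with h | h
    · obtain ⟨j, hj1, hj2, hj3⟩ := ih m h1 h
      exact ⟨j, by omega, hj2, hj3⟩
    · exact ⟨P, by omega, h, h2⟩

section Run
variable {K n : ℕ} (N : PortNetwork n) (x : Fin n → Fin (K + 1))

lemma deg_pos (hn : 2 ≤ n) (i : Fin n) : 0 < N.deg i := by
  have hex : ∃ j, N.adj i j = true := by
    have hne : ∃ j : Fin n, j ≠ i := by
      refine ⟨if h : i = ⟨0, by omega⟩ then ⟨1, by omega⟩ else ⟨0, by omega⟩, ?_⟩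
      split
      · rename_i h
        intro hc
        rw [← hc] at h
        simp [Fin.ext_iff] at h
      · rename_i h
        intro hc
        exact h hc.symm
    obtain ⟨j, hj⟩ := hne
    rcases (N.connected i j).cases_head with he | ⟨c, hc, _⟩
    · exact absurd he.symm hj
    · exact ⟨c, hc⟩
  obtain ⟨j, hj⟩ := hex
  rw [PortNetwork.deg, Fintype.card_pos_iff]
  exact ⟨⟨j, hj⟩⟩

/-- class-`c` queue length at node `i` -/
def qv (t : ℕ) (i : Fin n) (c : Cls K) : ℕ :=
  if c.2 = (0:Fin 3) then emobv N x t i c.1 true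
  else if c.2 = (1:Fin 3) then emobv N x t i c.1 false
  else ebalv N x t i c.1

/-- class-`c` pool at node `i` in step `t → t+1` -/
def Pl (t : ℕ) (i : Fin n) (c : Cls K) : ℕ := poolF (effZ N x t i) (arrIn N x t i) c

lemma Sn_minPl (t : ℕ) (i : Fin n) (c : Cls K) :
    Sn N x t i c = min (Pl N x t i c) (N.deg i) := rfl

/-- total number of alive class-`c` tokens -/
def Alv (t : ℕ) (c : Cls K) : ℕ := (∑ i, qv N x t i c) + FlT N x t c

lemma FlT_succ (t : ℕ) (c : Cls K) : FlT N x (t+1) c = ∑ i, Sn N x t i c := by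
  rw [FlT]
  exact Finset.sum_congr rfl (fun i _ => sent_card N x t i c)

lemma sum_pos_exists {f : Fin n → ℕ} (h : 1 ≤ ∑ i, f i) : ∃ i, 1 ≤ f i := by
  by_contra hc
  push_neg at hc
  have : ∑ i, f i = 0 := Finset.sum_eq_zero (fun i _ => by have := hc i; omega)
  omega

lemma acnt_pos_exists (t : ℕ) (c : Cls K) (h : 1 ≤ FlT N x t c) :
    ∃ i, 1 ≤ acnt N x t i c := by
  rw [← AmT_eq_FlT, AmT] at h
  exact sum_pos_exists h

lemma msgb_true_iff (t : ℕ) (i : Fin n) (q : Fin (N.deg i)) (c : Cls K) :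
    msgb N x (t+1) i q c = true ↔
      (N.deg i + (q:ℕ) - erotv N x t i c) % (N.deg i) < Sn N x t i c := by
  rw [msg_succ]
  simp

lemma arr_of_msg (t : ℕ) (i : Fin n) (q : Fin (N.deg i)) (c : Cls K)
    (h : msgb N x t i q c = true) :
    1 ≤ acnt N x t (flipS N ⟨i, q⟩).1 c := by
  have harr : arrIn N x t (flipS N ⟨i, q⟩).1 (flipS N ⟨i, q⟩).2 c = true := by
    have h2 := arrIn_flip N x t (flipS N ⟨i, q⟩) c
    rw [flipS_flipS] at h2
    rw [h2]
    exact h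
  rw [acnt, arrC]
  exact Finset.card_pos.mpr ⟨(flipS N ⟨i, q⟩).2,
    Finset.mem_filter.mpr ⟨Finset.mem_univ _, harr⟩⟩

lemma rot_lt (t : ℕ) (i : Fin n) (c : Cls K) (ht : 1 ≤ t) :
    rotv N x t i c < max (N.deg i) 1 := by
  obtain ⟨u, rfl⟩ : ∃ u, t = u + 1 := ⟨t - 1, by omega⟩
  rw [rot_succ]
  exact Nat.mod_lt _ (by omega)

lemma erot_eq_rot (t : ℕ) (i : Fin n) (c : Cls K) (ht : 1 ≤ t) :
    erotv N x t i c = rotv N x t i c := by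
  obtain ⟨u, rfl⟩ : ∃ u, t = u + 1 := ⟨t - 1, by omega⟩
  rw [erotv, rotv, effZ_succ]

def Csum (t0 : ℕ) (i : Fin n) (c : Cls K) (k : ℕ) : ℕ :=
  ∑ j ∈ Finset.range k, Sn N x (t0 + j) i c

lemma Csum_mono (t0 : ℕ) (i : Fin n) (c : Cls K) (j : ℕ) :
    Csum N x t0 i c j ≤ Csum N x t0 i c (j+1) := by
  rw [Csum, Csum, Finset.sum_range_succ]
  omega

lemma Csum_succ (t0 : ℕ) (i : Fin n) (c : Cls K) (j : ℕ) :
    Csum N x t0 i c (j+1) = Csum N x t0 i c j + Sn N x (t0 + j) i c := by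
  rw [Csum, Csum, Finset.sum_range_succ]

lemma rot_run (t0 : ℕ) (ht0 : 1 ≤ t0) (i : Fin n) (c : Cls K) :
    ∀ k, rotv N x (t0 + k) i c =
      (rotv N x t0 i c + Csum N x t0 i c k) % (max (N.deg i) 1) := by
  intro k
  induction k with
  | zero =>
    simp only [Nat.add_zero, Csum, Finset.range_zero, Finset.sum_empty]
    rw [Nat.mod_eq_of_lt (rot_lt N x t0 i c ht0)]
  | succ k ih =>
    have he : t0 + (k+1) = (t0 + k) + 1 := by omega
    rw [he, rot_succ, erot_eq_rot N x (t0+k) i c (by omega), ih, Nat.mod_add_mod,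
      Csum_succ, Nat.add_assoc]

end Run
end IA

namespace IA
section Run
variable {K n : ℕ} (N : PortNetwork n) (x : Fin n → Fin (K + 1))

section Orbit
variable (T p : ℕ) (hp : 0 < p) (hper : ∀ t, T ≤ t → RR N x (t + p) = RR N x t)

include hp hper in
/-- The coverage lemma: if class `c` stays alive and nothing ever destroys
its tokens, then every node receives class-`c` arrivals (at some orbit time,
hence infinitely often by periodicity). -/
lemma cover (hn : 2 ≤ n) (c : Cls K)
    (Hpool : ∀ t, T ≤ t → ∀ i, qv N x t i c + acnt N x t i c ≤ Pl N x t i c)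
    (Halive : ∀ t, T ≤ t → 1 ≤ Alv N x t c) :
    ∀ i : Fin n, ∃ t, max T 1 ≤ t ∧ 1 ≤ acnt N x t i c := by
  classical
  -- Step A : a seed node receiving an arrival
  have seed : ∃ i0 t0, max T 1 ≤ t0 ∧ 1 ≤ acnt N x t0 i0 c := by
    set T1 := max T 1 with hT1
    have hA := Halive T1 (le_max_left _ _)
    rw [Alv] at hA
    rcases Nat.lt_or_ge (FlT N x T1 c) 1 with hf | hf
    · have hq : 1 ≤ ∑ i, qv N x T1 i c := by omega
      obtain ⟨i, hi⟩ := sum_pos_exists hq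
      have hPl : 1 ≤ Pl N x T1 i c := le_trans (by omega) (Hpool T1 (le_max_left _ _) i)
      have hSn : 1 ≤ Sn N x T1 i c := by
        rw [Sn_minPl]
        have := deg_pos N hn i
        omega
      have hFl : 1 ≤ FlT N x (T1+1) c := by
        rw [FlT_succ]
        calc 1 ≤ Sn N x T1 i c := hSn
          _ ≤ ∑ i, Sn N x T1 i c :=
            Finset.single_le_sum (f := fun i => Sn N x T1 i c)
              (fun _ _ => Nat.zero_le _) (Finset.mem_univ i)
      obtain ⟨i', hi'⟩ := acnt_pos_exists N x (T1+1) c hFl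
      exact ⟨i', T1+1, by omega, hi'⟩
    · obtain ⟨i, hi⟩ := acnt_pos_exists N x T1 c hf
      exact ⟨i, T1, le_refl _, hi⟩
  -- Step B : closure under sending through any port
  have hclose : ∀ (i : Fin n) (t0 : ℕ), max T 1 ≤ t0 → 1 ≤ acnt N x t0 i c →
      ∀ q : Fin (N.deg i), ∃ t1, max T 1 ≤ t1 ∧ 1 ≤ acnt N x t1 (flipS N ⟨i, q⟩).1 c := by
    intro i t0 ht0 hacnt q
    have hd1 : 0 < N.deg i := deg_pos N hn i
    have hmax : max (N.deg i) 1 = N.deg i := by omega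
    have hPl : 1 ≤ Pl N x t0 i c := by
      have := Hpool t0 (by omega) i
      omega
    have hSn0 : 1 ≤ Sn N x t0 i c := by
      rw [Sn_minPl]; omega
    have hrlt : rotv N x t0 i c < N.deg i := by
      have := rot_lt N x t0 i c (by omega)
      omega
    have hrper : rotv N x (t0 + p) i c = rotv N x t0 i c := by
      rw [rotv, rotv, Stt_per N x T p hper t0 (by omega) i]
    have hrun := rot_run N x t0 (by omega) i c p
    rw [hmax] at hrun
    have hCd : Csum N x t0 i c p % N.deg i = 0 :=
      mod_cancel_lemma hrlt (by rw [← hrun, hrper])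
    have hC1 : 1 ≤ Csum N x t0 i c p := by
      have h0mem : 0 ∈ Finset.range p := Finset.mem_range.mpr hp
      calc 1 ≤ Sn N x (t0 + 0) i c := by rw [Nat.add_zero]; exact hSn0
        _ ≤ Csum N x t0 i c p :=
          Finset.single_le_sum (f := fun j => Sn N x (t0 + j) i c)
            (fun _ _ => Nat.zero_le _) h0mem
    have hCp : N.deg i ≤ Csum N x t0 i c p :=
      Nat.le_of_dvd (by omega) (Nat.dvd_of_mod_eq_zero hCd)
    set m := (N.deg i + (q:ℕ) - rotv N x t0 i c) % N.deg i with hm_def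
    have hm : m < N.deg i := Nat.mod_lt _ hd1
    obtain ⟨j, hj, hj1, hj2⟩ := interval_find (Csum N x t0 i c) (Csum_mono N x t0 i c) p m
      (by simp [Csum]) (lt_of_lt_of_le hm hCp)
    rw [Csum_succ] at hj2
    have hSnj : Sn N x (t0+j) i c ≤ N.deg i := Sn_le N x (t0+j) i c
    have hu : m - Csum N x t0 i c j < Sn N x (t0+j) i c := by omega
    have hrotj : rotv N x (t0+j) i c = (rotv N x t0 i c + Csum N x t0 i c j) % N.deg i := by
      rw [rot_run N x t0 (by omega) i c j, hmax]
    have hrotj_lt : rotv N x (t0+j) i c < N.deg i := by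
      have := rot_lt N x (t0+j) i c (by omega)
      omega
    have hq : ((rotv N x (t0+j) i c) + (m - Csum N x t0 i c j)) % N.deg i = (q:ℕ) := by
      rw [hrotj, Nat.mod_add_mod]
      have he : rotv N x t0 i c + Csum N x t0 i c j + (m - Csum N x t0 i c j)
          = rotv N x t0 i c + m := by omega
      rw [he, hm_def]
      exact mod_inv_lemma hrlt q.isLt
    have hwin : (N.deg i + (q:ℕ) - rotv N x (t0+j) i c) % N.deg i < Sn N x (t0+j) i c := by
      rw [← hq, window_mem_iff hrotj_lt hSnj hu]
      exact hu
    have hmsg : msgb N x (t0+j+1) i q c = true := by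
      rw [msgb_true_iff, erot_eq_rot N x (t0+j) i c (by omega)]
      exact hwin
    exact ⟨t0+j+1, by omega, arr_of_msg N x (t0+j+1) i q c hmsg⟩
  -- Step C : spread along the connected graph
  obtain ⟨i0, t0, ht0, hi0⟩ := seed
  have hW : ∀ (a b : Fin n), N.adj a b = true →
      (∃ t, max T 1 ≤ t ∧ 1 ≤ acnt N x t a c) → ∃ t, max T 1 ≤ t ∧ 1 ≤ acnt N x t b c := by
    intro a b hadj ⟨t, ht, hac⟩
    have := hclose a t ht hac (N.port a ⟨b, hadj⟩)
    have hfl : (flipS N ⟨a, N.port a ⟨b, hadj⟩⟩).1 = b := by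
      show (nbrS N a (N.port a ⟨b, hadj⟩)).1 = b
      exact congrArg Subtype.val ((N.port a).symm_apply_apply ⟨b, hadj⟩)
    rwa [hfl] at this
  intro i
  have hconn := N.connected i0 i
  induction hconn with
  | refl => exact ⟨t0, ht0, hi0⟩
  | tail hab hbc ih => exact hW _ _ hbc ih

end Orbit
end Run
end IA

namespace IA

lemma const_of_step (f : ℕ → ℕ) (T : ℕ) (h : ∀ t, T ≤ t → f (t+1) = f t) :
    ∀ t, T ≤ t → f t = f T := by
  intro t ht
  induction t, ht using Nat.le_induction with
  | base => rfl
  | succ t ht ih => rw [h t ht, ih]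

section Run
variable {K n : ℕ} (N : PortNetwork n) (x : Fin n → Fin (K + 1))

lemma qv_M (t : ℕ) (i : Fin n) (v : Lvl K) (s : Bool) :
    qv N x t i (v, sideT s) = emobv N x t i v s := by
  cases s
  · rw [qv]
    rw [if_neg (show ¬(sideT false = (0:Fin 3)) by decide),
      if_pos (show sideT false = (1:Fin 3) by decide)]
  · rw [qv, if_pos (show sideT true = (0:Fin 3) by decide)]

lemma qv_B (t : ℕ) (i : Fin n) (v : Lvl K) :
    qv N x t i (v, (2:Fin 3)) = ebalv N x t i v := by
  rw [qv]
  rw [if_neg (show ¬((2:Fin 3) = 0) by decide), if_neg (show ¬((2:Fin 3) = 1) by decide)]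

lemma Pl_M (t : ℕ) (i : Fin n) (v : Lvl K) (s : Bool) :
    Pl N x t i (v, sideT s) = Pm N x t i v s := by
  cases s
  · rw [Pl, poolF]
    rw [if_neg (show ¬((v, sideT false).2 = (0:Fin 3)) by simp [sideT]),
      if_pos (show (v, sideT false).2 = (1:Fin 3) by simp [sideT])]
    rfl
  · rw [Pl, poolF]
    rw [if_pos (show (v, sideT true).2 = (0:Fin 3) by simp [sideT])]
    rfl

lemma Pl_B (t : ℕ) (i : Fin n) (v : Lvl K) :
    Pl N x t i (v, (2:Fin 3)) = Pb N x t i v := by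
  rw [Pl, poolF]
  rw [if_neg (show ¬((2:Fin 3) = 0) by decide), if_neg (show ¬((2:Fin 3) = 1) by decide)]
  rfl

lemma Alv_M (t : ℕ) (v : Lvl K) (s : Bool) :
    Alv N x t (v, sideT s) = AlM N x t v s := by
  rw [Alv, AlM, Finset.sum_congr rfl (fun i _ => qv_M N x t i v s)]

lemma Alv_B (t : ℕ) (v : Lvl K) :
    Alv N x t (v, (2:Fin 3)) = AlB N x t v := by
  rw [Alv, AlB, Finset.sum_congr rfl (fun i _ => qv_B N x t i v)]

lemma estat_eq_stat (t : ℕ) (ht : 1 ≤ t) (i : Fin n) (v : Lvl K) (s : Bool) :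
    estatv N x t i v s = statv N x t i v s := by
  obtain ⟨u, rfl⟩ : ∃ u, t = u + 1 := ⟨t - 1, by omega⟩
  rw [estatv, statv, effZ_succ]

lemma elam_eq_lam (t : ℕ) (ht : 1 ≤ t) (i : Fin n) (v : Lvl K) :
    elamv N x t i v = lamv N x t i v := by
  obtain ⟨u, rfl⟩ : ∃ u, t = u + 1 := ⟨t - 1, by omega⟩
  rw [elamv, lamv, effZ_succ]

lemma statv_le_EStT (t : ℕ) (ht : 1 ≤ t) (i : Fin n) (v : Lvl K) (s : Bool) :
    statv N x t i v s ≤ EStT N x t v s := by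
  rw [EStT]
  rw [← estat_eq_stat N x t ht i v s]
  exact Finset.single_le_sum (f := fun i => estatv N x t i v s)
    (fun _ _ => Nat.zero_le _) (Finset.mem_univ i)

lemma FlT_le_AlM (t : ℕ) (v : Lvl K) (s : Bool) :
    FlT N x t (v, sideT s) ≤ AlM N x t v s := by
  rw [AlM]; omega

lemma FlT_le_AlB (t : ℕ) (v : Lvl K) :
    FlT N x t (v, (2:Fin 3)) ≤ AlB N x t v := by
  rw [AlB]; omega

lemma MT0_swap (v : Lvl K) (s : Bool) : MT0 x v (!s) = ST0 x v s := by
  cases s <;> (rw [MT0, ST0]; exact Finset.sum_congr rfl (fun i _ => rfl))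

lemma ST0_swap (v : Lvl K) (s : Bool) : ST0 x v (!s) = MT0 x v s := by
  cases s <;> (rw [MT0, ST0]; exact Finset.sum_congr rfl (fun i _ => rfl))

section Orbit
variable (T p : ℕ) (hp : 0 < p) (hper : ∀ t, T ≤ t → RR N x (t + p) = RR N x t)

include hper in
lemma hper1 : ∀ t, max T 1 ≤ t → RR N x (t + p) = RR N x t := by
  intro t ht
  exact hper t (by omega)

include hp hper in
lemma Hpool_M (v : Lvl K) (s : Bool) :
    ∀ t, max T 1 ≤ t → ∀ i,
      qv N x t i (v, sideT s) + acnt N x t i (v, sideT s) ≤ Pl N x t i (v, sideT s) := by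
  intro t ht i
  rw [qv_M, Pl_M, Pm_eq, Ca_orbit N x T p hp hper t (by omega) i v s]
  omega

include hp hper in
lemma Hpool_B (v : Lvl K) :
    ∀ t, max T 1 ≤ t → ∀ i,
      qv N x t i (v, (2:Fin 3)) + acnt N x t i (v, (2:Fin 3)) ≤ Pl N x t i (v, (2:Fin 3)) := by
  intro t ht i
  rw [qv_B, Pl_B, Pb_orbit N x T p hp hper t (by omega) i v]

end Orbit
end Run
end IA

namespace IA
section Run
variable {K n : ℕ} (N : PortNetwork n) (x : Fin n → Fin (K + 1))

lemma Ca_eq (t : ℕ) (i : Fin n) (v : Lvl K) (s : Bool) :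
    Ca N x t i v s = min (acnt N x t i (v, sideT s)) (estatv N x t i v s) := rfl

lemma EStT_pos_host (t : ℕ) (ht : 1 ≤ t) (v : Lvl K) (s : Bool)
    (h : 1 ≤ EStT N x t v s) : ∃ w, 1 ≤ statv N x t w v s := by
  rw [EStT] at h
  obtain ⟨w, hw⟩ := sum_pos_exists h
  exact ⟨w, by rwa [estat_eq_stat N x t ht w v s] at hw⟩

section Orbit
variable (T p : ℕ) (hp : 0 < p) (hper : ∀ t, T ≤ t → RR N x (t + p) = RR N x t)

include hp hper in
lemma AlM_win_alive (v : Lvl K) (s : Bool) (hgt : ST0 x v s < MT0 x v s) :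
    ∀ t, max T 1 ≤ t → 1 ≤ Alv N x t (v, sideT s) := by
  intro t ht
  rw [Alv_M]
  have hc := consM N x t v s
  omega

include hp hper in
lemma stat_win_zero (hn : 2 ≤ n) (v : Lvl K) (s : Bool) (hgt : ST0 x v s < MT0 x v s) :
    ∀ t, max T 1 ≤ t → ∀ i, statv N x t i v s = 0 := by
  have hzero : ∀ i, statv N x (max T 1) i v s = 0 := by
    intro i
    by_contra hne
    have hpos : 1 ≤ statv N x (max T 1) i v s := by omega
    have hconst := stat_orbit_const N x T p hp hper (max T 1)
      (le_max_left _ _) (le_max_right _ _) i v s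
    obtain ⟨t2, ht2, hacn⟩ := cover N x (max T 1) p hp (hper1 N x T p hper) hn (v, sideT s)
      (Hpool_M N x T p hp hper v s) (AlM_win_alive N x T p hp hper v s hgt) i
    have ht2' : max T 1 ≤ t2 := by omega
    have hca : 1 ≤ Ca N x t2 i v s := by
      rw [Ca_eq, estat_eq_stat N x t2 (by omega) i v s, hconst t2 ht2']
      omega
    have := Ca_orbit N x T p hp hper t2 (by omega) i v s
    omega
  intro t ht i
  rw [stat_orbit_const N x T p hp hper (max T 1)
    (le_max_left _ _) (le_max_right _ _) i v s t ht]
  exact hzero i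

include hp hper in
lemma AlM_lose_zero (hn : 2 ≤ n) (v : Lvl K) (s : Bool) (hgt : ST0 x v s < MT0 x v s) :
    ∀ t, max T 1 ≤ t → AlM N x t v (!s) = 0 := by
  have hconst : ∀ t, max T 1 ≤ t → AlM N x t v (!s) = AlM N x (max T 1) v (!s) :=
    const_of_step _ (max T 1)
      (fun t ht => AlM_orbit N x T p hp hper t (by omega) v (!s))
  suffices h : AlM N x (max T 1) v (!s) = 0 by
    intro t ht
    rw [hconst t ht, h]
  by_contra hne
  have hpos : 1 ≤ AlM N x (max T 1) v (!s) := by omega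
  have hal : ∀ t, max T 1 ≤ t → 1 ≤ Alv N x t (v, sideT (!s)) := by
    intro t ht
    rw [Alv_M, hconst t ht]
    omega
  have hE : 1 ≤ EStT N x (max T 1) v (!s) := by
    have hc := consM N x (max T 1) v (!s)
    rw [ST0_swap, MT0_swap] at hc
    omega
  obtain ⟨w, hw⟩ := EStT_pos_host N x (max T 1) (le_max_right _ _) v (!s) hE
  have hconstw := stat_orbit_const N x T p hp hper (max T 1)
    (le_max_left _ _) (le_max_right _ _) w v (!s)
  obtain ⟨t2, ht2, hacn⟩ := cover N x (max T 1) p hp (hper1 N x T p hper) hn (v, sideT (!s))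
    (Hpool_M N x T p hp hper v (!s)) hal w
  have ht2' : max T 1 ≤ t2 := by omega
  have hca : 1 ≤ Ca N x t2 w v (!s) := by
    rw [Ca_eq, estat_eq_stat N x t2 (by omega) w v (!s), hconstw t2 ht2']
    omega
  have := Ca_orbit N x T p hp hper t2 (by omega) w v (!s)
  omega

include hp hper in
lemma AlB_win_zero (hn : 2 ≤ n) (v : Lvl K) (s : Bool) (hgt : ST0 x v s < MT0 x v s) :
    ∀ t, max T 1 ≤ t → AlB N x t v = 0 := by
  have hconst : ∀ t, max T 1 ≤ t → AlB N x t v = AlB N x (max T 1) v :=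
    const_of_step _ (max T 1)
      (fun t ht => AlB_orbit N x T p hp hper t (by omega) v)
  suffices h : AlB N x (max T 1) v = 0 by
    intro t ht
    rw [hconst t ht, h]
  by_contra hne
  have hpos : 1 ≤ AlB N x (max T 1) v := by omega
  have hal : ∀ t, max T 1 ≤ t → 1 ≤ Alv N x t (v, (2:Fin 3)) := by
    intro t ht
    rw [Alv_B, hconst t ht]
    omega
  have hE : 1 ≤ EStT N x (max T 1) v (!s) := by
    have hc := consM N x (max T 1) v (!s)
    rw [ST0_swap, MT0_swap] at hc
    have h0 := AlM_lose_zero N x T p hp hper hn v s hgt (max T 1) (le_refl _)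
    omega
  obtain ⟨w, hw⟩ := EStT_pos_host N x (max T 1) (le_max_right _ _) v (!s) hE
  have hconstw := stat_orbit_const N x T p hp hper (max T 1)
    (le_max_left _ _) (le_max_right _ _) w v (!s)
  obtain ⟨t2, ht2, hacn⟩ := cover N x (max T 1) p hp (hper1 N x T p hper) hn (v, (2:Fin 3))
    (Hpool_B N x T p hp hper v) hal w
  have ht2' : max T 1 ≤ t2 := by omega
  -- at node `w` the balance pool is killed, contradicting `Pb_orbit`
  have hkill : Pb N x t2 w v = 0 := by
    rw [Pb_eq]
    have hCa1 := Ca_orbit N x T p hp hper t2 (by omega) w v (!s)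
    have hstat : 1 ≤ estatv N x t2 w v (!s) := by
      rw [estat_eq_stat N x t2 (by omega) w v (!s), hconstw t2 ht2']
      exact hw
    rw [if_neg]
    cases s
    · simp only [Bool.not_false] at hCa1 hstat
      omega
    · simp only [Bool.not_true] at hCa1 hstat
      omega
  have hfull := Pb_orbit N x T p hp hper t2 (by omega) w v
  omega

include hp hper in
lemma lam_win (hn : 2 ≤ n) (v : Lvl K) (s : Bool) (hgt : ST0 x v s < MT0 x v s) (i : Fin n) :
    ∃ T2, ∀ t, T2 ≤ t → lamv N x t i v = sideT s := by
  have hz2 : ∀ t, max T 1 ≤ t → ∀ j, acnt N x t j (v, (2:Fin 3)) = 0 := by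
    intro t ht j
    have h1 := acnt_le_FlT N x t j (v, (2:Fin 3))
    have h2 := FlT_le_AlB N x t v
    have h3 := AlB_win_zero N x T p hp hper hn v s hgt t ht
    omega
  have hz1 : ∀ t, max T 1 ≤ t → ∀ j, acnt N x t j (v, sideT (!s)) = 0 := by
    intro t ht j
    have h1 := acnt_le_FlT N x t j (v, sideT (!s))
    have h2 := FlT_le_AlM N x t v (!s)
    have h3 := AlM_lose_zero N x T p hp hper hn v s hgt t ht
    omega
  obtain ⟨t2, ht2, hacn⟩ := cover N x (max T 1) p hp (hper1 N x T p hper) hn (v, sideT s)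
    (Hpool_M N x T p hp hper v s) (AlM_win_alive N x T p hp hper v s hgt) i
  have ht2' : max T 1 ≤ t2 := by omega
  have key : ∀ t, max T 1 ≤ t →
      (1 ≤ acnt N x t i (v, sideT s) ∨ lamv N x t i v = sideT s) →
      lamv N x (t+1) i v = sideT s := by
    intro t ht hcase
    rw [lam_succ, elam_eq_lam N x t (by omega) i v]
    cases s
    · -- s = false : target value is sideT false = 1
      have e1 : acnt N x t i (v, (0:Fin 3)) = 0 := by
        simpa [sideT, Bool.not_false] using hz1 t ht i
      have e2 : acnt N x t i (v, (2:Fin 3)) = 0 := hz2 t ht i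
      rw [if_neg (by omega : ¬ 0 < acnt N x t i (v, (0:Fin 3)))]
      rcases hcase with hc | hc
      · have hc' : 0 < acnt N x t i (v, (1:Fin 3)) := by
          have he : (v, sideT false) = (v, (1:Fin 3)) := rfl
          rw [he] at hc
          omega
        rw [if_pos hc']
        rfl
      · rw [hc]
        split
        · rfl
        · rw [if_neg (by omega : ¬ 0 < acnt N x t i (v, (2:Fin 3)))]
    · -- s = true : target value is sideT true = 0
      have e1 : acnt N x t i (v, (1:Fin 3)) = 0 := by
        simpa [sideT, Bool.not_true] using hz1 t ht i
      have e2 : acnt N x t i (v, (2:Fin 3)) = 0 := hz2 t ht i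
      rcases hcase with hc | hc
      · have hc' : 0 < acnt N x t i (v, (0:Fin 3)) := by
          have he : (v, sideT true) = (v, (0:Fin 3)) := rfl
          rw [he] at hc
          omega
        rw [if_pos hc']
        rfl
      · rw [hc]
        split
        · rfl
        · rw [if_neg (by omega : ¬ 0 < acnt N x t i (v, (1:Fin 3))),
            if_neg (by omega : ¬ 0 < acnt N x t i (v, (2:Fin 3)))]
  refine ⟨t2 + 1, ?_⟩
  intro t ht
  induction t, ht using Nat.le_induction with
  | base => exact key t2 ht2' (Or.inl hacn)
  | succ t ht ih => exact key t (by omega) (Or.inr ih)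

end Orbit
end Run
end IA

namespace IA

lemma anti_chain (f : ℕ → ℕ) (h : ∀ t, f (t+1) ≤ f t) : ∀ t, f t ≤ f 0 := by
  intro t
  induction t with
  | zero => exact le_refl _
  | succ t ih => exact le_trans (h t) ih

section Run
variable {K n : ℕ} (N : PortNetwork n) (x : Fin n → Fin (K + 1))

lemma estatv_le_EStT (t : ℕ) (i : Fin n) (v : Lvl K) (s : Bool) :
    estatv N x t i v s ≤ EStT N x t v s := by
  rw [EStT]
  exact Finset.single_le_sum (f := fun i => estatv N x t i v s)
    (fun _ _ => Nat.zero_le _) (Finset.mem_univ i)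

section Orbit
variable (T p : ℕ) (hp : 0 < p) (hper : ∀ t, T ≤ t → RR N x (t + p) = RR N x t)

include hp hper in
lemma stat_bal_zero (hn : 2 ≤ n) (v : Lvl K) (s : Bool) (hbs : MT0 x v s = ST0 x v s) :
    ∀ t, max T 1 ≤ t → ∀ j, statv N x t j v s = 0 := by
  have hzero : ∀ j, statv N x (max T 1) j v s = 0 := by
    intro j
    by_contra hne
    have hpos : 1 ≤ statv N x (max T 1) j v s := by omega
    have hconst := stat_orbit_const N x T p hp hper (max T 1)
      (le_max_left _ _) (le_max_right _ _) j v s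
    have hal : ∀ t, max T 1 ≤ t → 1 ≤ Alv N x t (v, sideT s) := by
      intro t ht
      rw [Alv_M]
      have hc := consM N x t v s
      have h1 : 1 ≤ statv N x t j v s := by rw [hconst t ht]; exact hpos
      have h2 : statv N x t j v s ≤ EStT N x t v s := statv_le_EStT N x t (by omega) j v s
      omega
    obtain ⟨t2, ht2, hacn⟩ := cover N x (max T 1) p hp (hper1 N x T p hper) hn (v, sideT s)
      (Hpool_M N x T p hp hper v s) hal j
    have ht2' : max T 1 ≤ t2 := by omega
    have hca : 1 ≤ Ca N x t2 j v s := by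
      rw [Ca_eq, estat_eq_stat N x t2 (by omega) j v s, hconst t2 ht2']
      omega
    have := Ca_orbit N x T p hp hper t2 (by omega) j v s
    omega
  intro t ht j
  rw [stat_orbit_const N x T p hp hper (max T 1)
    (le_max_left _ _) (le_max_right _ _) j v s t ht]
  exact hzero j

include hp hper in
lemma EStT_bal_zero (hn : 2 ≤ n) (v : Lvl K) (s : Bool) (hbs : MT0 x v s = ST0 x v s) :
    ∀ t, max T 1 ≤ t → EStT N x t v s = 0 := by
  intro t ht
  rw [EStT]
  refine Finset.sum_eq_zero fun j _ => ?_
  rw [estat_eq_stat N x t (by omega) j v s]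
  exact stat_bal_zero N x T p hp hper hn v s hbs t ht j

include hp hper in
lemma AlM_bal_zero (hn : 2 ≤ n) (v : Lvl K) (s : Bool) (hbs : MT0 x v s = ST0 x v s) :
    ∀ t, max T 1 ≤ t → AlM N x t v s = 0 := by
  intro t ht
  have hc := consM N x t v s
  have h0 := EStT_bal_zero N x T p hp hper hn v s hbs t ht
  omega

include hp hper in
lemma lam_bal (hn : 2 ≤ n) (v : Lvl K) (heq : MT0 x v true = ST0 x v true) (i : Fin n) :
    ∃ T2, ∀ t, T2 ≤ t → lamv N x t i v = 2 := by
  classical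
  have h1 := MT0_swap x v true
  have h2 := ST0_swap x v true
  simp only [Bool.not_true] at h1 h2
  have heq2 : MT0 x v false = ST0 x v false := by omega
  have hbs : ∀ s, MT0 x v s = ST0 x v s := by
    intro s; cases s
    · exact heq2
    · exact heq
  -- side mobiles are extinct on orbit, hence no side arrivals there
  have hznoside : ∀ t, max T 1 ≤ t → ∀ j (s : Bool), acnt N x t j (v, sideT s) = 0 := by
    intro t ht j s
    have ha1 := acnt_le_FlT N x t j (v, sideT s)
    have ha2 := FlT_le_AlM N x t v s
    have ha3 := AlM_bal_zero N x T p hp hper hn v s (hbs s) t ht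
    omega
  rcases Nat.eq_zero_or_pos (ST0 x v true + ST0 x v false) with h0 | h0
  · -- trivial case : no tokens at level v, ever
    have hx : ∀ j, x j = v := by
      intro j
      have hz1 : stat0 (x j) v true = 0 := by
        have : ST0 x v true = 0 := by omega
        rw [ST0] at this
        exact (Finset.sum_eq_zero_iff.mp this) j (Finset.mem_univ j)
      have hz2 : stat0 (x j) v false = 0 := by
        have : ST0 x v false = 0 := by omega
        rw [ST0] at this
        exact (Finset.sum_eq_zero_iff.mp this) j (Finset.mem_univ j)
      have hz1' : (v:ℕ) - ((x j):ℕ) = 0 := by simpa [stat0] using hz1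
      have hz2' : ((x j):ℕ) - (v:ℕ) = 0 := by simpa [stat0] using hz2
      apply Fin.ext
      omega
    -- no static tokens ever, hence no cancellations, no tokens of any class
    have hES : ∀ t (s : Bool), EStT N x t v s = 0 := by
      intro t s
      have hchain := anti_chain (fun t => EStT N x t v s)
        (fun t => EStT_antitone N x t v s) t
      have h00 : EStT N x 0 v s = ST0 x v s := EStT_zero N x v s
      have : ST0 x v s = 0 := by cases s <;> omega
      omega
    have hAlM : ∀ t (s : Bool), AlM N x t v s = 0 := by
      intro t s
      have hc := consM N x t v s
      have := hES t s
      have : MT0 x v s = 0 := by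
        have := hbs s
        have : ST0 x v s = 0 := by cases s <;> omega
        omega
      omega
    have hCa : ∀ t j (s : Bool), Ca N x t j v s = 0 := by
      intro t j s
      have ha := Ca_le_estat N x t j v s
      have hb := estatv_le_EStT N x t j v s
      have := hES t s
      omega
    have hAlB : ∀ t, AlB N x t v = 0 := by
      intro t
      induction t with
      | zero => exact AlB_zero N x v
      | succ t ih =>
        rw [AlB_succ]
        have hup : ∀ j, Pb N x t j v ≤ ebalv N x t j v + acnt N x t j (v, (2:Fin 3)) := by
          intro j
          rw [Pb_eq, Bi_eq, hCa t j true, hCa t j false]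
          split <;> omega
        have : ∑ j, Pb N x t j v ≤ ∑ j, (ebalv N x t j v + acnt N x t j (v, (2:Fin 3))) :=
          Finset.sum_le_sum fun j _ => hup j
        have hAB : AlB N x t v = ∑ j, (ebalv N x t j v + acnt N x t j (v, (2:Fin 3))) := by
          rw [AlB, ← AmT_eq_FlT, AmT, Finset.sum_add_distrib]
        omega
    have hno : ∀ t j (c2 : Fin 3), acnt N x t j (v, c2) = 0 := by
      intro t j c2
      have h3 : c2 = 0 ∨ c2 = 1 ∨ c2 = 2 := by omega
      rcases h3 with rfl | rfl | rfl
      · have := hznoside  -- not usable for all t; redo directly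
        have ha1 := acnt_le_FlT N x t j (v, (0:Fin 3))
        have ha2 : FlT N x t (v, (0:Fin 3)) ≤ AlM N x t v true := by
          have := FlT_le_AlM N x t v true
          simpa [sideT] using this
        have := hAlM t true
        omega
      · have ha1 := acnt_le_FlT N x t j (v, (1:Fin 3))
        have ha2 : FlT N x t (v, (1:Fin 3)) ≤ AlM N x t v false := by
          have := FlT_le_AlM N x t v false
          simpa [sideT] using this
        have := hAlM t false
        omega
      · have ha1 := acnt_le_FlT N x t j (v, (2:Fin 3))
        have ha2 := FlT_le_AlB N x t v
        have := hAlB t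
        omega
    refine ⟨1, ?_⟩
    intro t ht
    induction t with
    | zero => omega
    | succ t ih =>
      rw [lam_succ, hno t i 0, hno t i 1, hno t i 2]
      simp only [Nat.lt_irrefl, if_false]
      rcases Nat.eq_zero_or_pos t with rfl | hpos
      · rw [elam_zero, lam0, hx i]
        simp
      · rw [elam_eq_lam N x t (by omega) i v, ih (by omega)]
  · -- nontrivial case : a balance token survives forever
    set StS := fun t => EStT N x t v true + EStT N x t v false with hStS
    have hanti : ∀ t, StS (t+1) ≤ StS t := by
      intro t
      have := EStT_antitone N x t v true
      have := EStT_antitone N x t v false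
      simp only [hStS]
      omega
    have hS0 : 1 ≤ StS 0 := by
      simp only [hStS]
      rw [EStT_zero, EStT_zero]
      omega
    have hST1 : StS (max T 1) = 0 := by
      simp only [hStS]
      rw [EStT_bal_zero N x T p hp hper hn v true (hbs true) _ (le_refl _),
        EStT_bal_zero N x T p hp hper hn v false (hbs false) _ (le_refl _)]
    have hex : ∃ t, StS t = 0 := ⟨max T 1, hST1⟩
    set t1 := Nat.find hex with ht1
    have ht1z : StS t1 = 0 := Nat.find_spec hex
    have ht1pos : 1 ≤ t1 := by
      rcases Nat.eq_zero_or_pos t1 with h | h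
      · rw [h] at ht1z; omega
      · exact h
    have ht1le : t1 ≤ max T 1 := Nat.find_min' hex hST1
    have hprev : 1 ≤ StS (t1 - 1) := by
      have := Nat.find_min hex (show t1 - 1 < t1 by omega)
      omega
    set ts := t1 - 1 with hts
    have hts1 : ts + 1 = t1 := by omega
    -- a cancellation happens at step ts, at a node with no remaining statics
    have hCsum : CaT N x ts v true + CaT N x ts v false = StS ts := by
      obtain ⟨e1, e2⟩ := EStT_succ N x ts v true
      obtain ⟨e3, e4⟩ := EStT_succ N x ts v false
      have : StS (ts+1) = 0 := by rw [hts1]; exact ht1z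
      simp only [hStS] at this ⊢
      omega
    have hCpos : 1 ≤ CaT N x ts v true + CaT N x ts v false := by omega
    have hw : ∃ w, 1 ≤ Bi N x ts w v := by
      rcases Nat.lt_or_ge (CaT N x ts v true) 1 with h | h
      · have : 1 ≤ CaT N x ts v false := by omega
        rw [CaT] at this
        obtain ⟨w, hw⟩ := sum_pos_exists this
        exact ⟨w, by rw [Bi_eq]; omega⟩
      · rw [CaT] at h
        obtain ⟨w, hw⟩ := sum_pos_exists h
        exact ⟨w, by rw [Bi_eq]; omega⟩
    obtain ⟨w, hwBi⟩ := hw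
    have hstatz : ∀ t, t1 ≤ t → ∀ j (s : Bool), statv N x t j v s = 0 := by
      intro t ht j s
      have hS : StS t = 0 := by
        have hchain : StS t ≤ StS t1 := by
          have hall : ∀ k, StS (t1 + k) ≤ StS t1 := by
            intro k
            induction k with
            | zero => exact le_refl _
            | succ k ih =>
              have he : t1 + (k+1) = (t1 + k) + 1 := by omega
              rw [he]
              exact le_trans (hanti (t1 + k)) ih
          have hk := hall (t - t1)
          have he2 : t1 + (t - t1) = t := by omega
          rwa [he2] at hk
        omega
      have ha := statv_le_EStT N x t (by omega) j v s
      simp only [hStS] at hS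
      cases s
      · omega
      · omega
    have hPbw : 1 ≤ Pb N x ts w v := by
      rw [Pb_eq]
      have e1 : estatv N x ts w v true - Ca N x ts w v true = statv N x (ts+1) w v true := by
        rw [stat_succ]
      have e2 : estatv N x ts w v false - Ca N x ts w v false = statv N x (ts+1) w v false := by
        rw [stat_succ]
      rw [if_pos]
      · omega
      · rw [e1, e2, hstatz (ts+1) (by omega) w true, hstatz (ts+1) (by omega) w false]
    have hAlB1 : 1 ≤ AlB N x (ts+1) v := by
      rw [AlB_succ]
      calc 1 ≤ Pb N x ts w v := hPbw
        _ ≤ ∑ j, Pb N x ts j v :=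
          Finset.single_le_sum (f := fun j => Pb N x ts j v)
            (fun _ _ => Nat.zero_le _) (Finset.mem_univ w)
    have hAlBmono : ∀ t, ts + 1 ≤ t → 1 ≤ AlB N x t v := by
      intro t ht
      induction t, ht using Nat.le_induction with
      | base => exact hAlB1
      | succ t ht ih =>
        rw [AlB_succ]
        have hfull : ∀ j, Pb N x t j v = ebalv N x t j v + acnt N x t j (v, (2:Fin 3))
            + Bi N x t j v := by
          intro j
          rw [Pb_eq, if_pos]
          have e1 : estatv N x t j v true - Ca N x t j v true = statv N x (t+1) j v true := by
            rw [stat_succ]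
          have e2 : estatv N x t j v false - Ca N x t j v false = statv N x (t+1) j v false := by
            rw [stat_succ]
          rw [e1, e2, hstatz (t+1) (by omega) j true, hstatz (t+1) (by omega) j false]
        have hlow : AlB N x t v ≤ ∑ j, Pb N x t j v := by
          have hAB : AlB N x t v = ∑ j, (ebalv N x t j v + acnt N x t j (v, (2:Fin 3))) := by
            rw [AlB, ← AmT_eq_FlT, AmT, Finset.sum_add_distrib]
          rw [hAB]
          refine Finset.sum_le_sum fun j _ => ?_
          rw [hfull j]
          omega
        omega
    have hal : ∀ t, max T 1 ≤ t → 1 ≤ Alv N x t (v, (2:Fin 3)) := by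
      intro t ht
      rw [Alv_B]
      exact hAlBmono t (by omega)
    obtain ⟨t2, ht2, hacn⟩ := cover N x (max T 1) p hp (hper1 N x T p hper) hn (v, (2:Fin 3))
      (Hpool_B N x T p hp hper v) hal i
    have ht2' : max T 1 ≤ t2 := by omega
    have key : ∀ t, max T 1 ≤ t →
        (1 ≤ acnt N x t i (v, (2:Fin 3)) ∨ lamv N x t i v = 2) →
        lamv N x (t+1) i v = 2 := by
      intro t ht hcase
      rw [lam_succ, elam_eq_lam N x t (by omega) i v]
      have e0 : acnt N x t i (v, (0:Fin 3)) = 0 := by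
        have := hznoside t ht i true
        simpa [sideT] using this
      have e1 : acnt N x t i (v, (1:Fin 3)) = 0 := by
        have := hznoside t ht i false
        simpa [sideT] using this
      rw [if_neg (by omega), if_neg (by omega)]
      rcases hcase with hc | hc
      · rw [if_pos (by omega)]
      · rw [hc]
        split <;> rfl
    refine ⟨t2 + 1, ?_⟩
    intro t ht
    induction t, ht using Nat.le_induction with
    | base => exact key t2 ht2' (Or.inl hacn)
    | succ t ht ih => exact key t (by omega) (Or.inr ih)

end Orbit
end Run
end IA

namespace IA

lemma card_filter_lt {K : ℕ} (m : ℕ) (hm : m ≤ K + 1) :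
    (Finset.univ.filter (fun v : Fin (K+1) => (v:ℕ) < m)).card = m := by
  classical
  have himg : (Finset.univ.filter (fun v : Fin (K+1) => (v:ℕ) < m)) =
      (Finset.range m).image (fun j => (⟨min j K, by omega⟩ : Fin (K+1))) := by
    ext v
    simp only [Finset.mem_filter, Finset.mem_univ, true_and, Finset.mem_image,
      Finset.mem_range]
    constructor
    · intro hv
      refine ⟨(v:ℕ), hv, ?_⟩
      apply Fin.ext
      simp only
      have := v.isLt
      omega
    · rintro ⟨j, hj, rfl⟩
      simp only
      omega
  rw [himg, Finset.card_image_of_injOn, Finset.card_range]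
  intro a ha b hb he
  simp only [Finset.coe_range, Set.mem_Iio] at ha hb
  have := congrArg Fin.val he
  simp only at this
  omega

/-- the expected limit value of `lam` at level `v` -/
def expectLam (nn Sx : ℕ) {K : ℕ} (v : Fin (K+1)) : Fin 3 :=
  if nn * (v:ℕ) < Sx then 0 else if Sx < nn * (v:ℕ) then 1 else 2

lemma decode_expected {K : ℕ} (nn Sx : ℕ) (hnn : 0 < nn) (y : Fin (K+1) ⊕ Fin K)
    (hy : Sum.elim (fun w : Fin (K+1) => Sx = nn * (w:ℕ))
      (fun w : Fin K => nn * (w:ℕ) < Sx ∧ Sx < nn * ((w:ℕ)+1)) y) :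
    decodeLam (fun v : Fin (K+1) => expectLam nn Sx v) = y := by
  classical
  cases y with
  | inl w =>
    simp only [Sum.elim_inl] at hy
    have hfind : Fin.find? (fun v : Fin (K+1) => decide (expectLam nn Sx v = 2)) = some w := by
      rw [Fin.find?_eq_some_iff]
      constructor
      · rw [decide_eq_true_eq, expectLam, if_neg (by omega), if_neg (by omega)]
      · intro j hjw'
        rw [decide_eq_false_iff_not]
        intro hj
        rw [expectLam] at hj
        have hjw : (j:ℕ) < (w:ℕ) := hjw'
        have : nn * (j:ℕ) < nn * (w:ℕ) := by
          exact mul_lt_mul_of_pos_left hjw hnn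
        rw [if_pos (by omega)] at hj
        exact absurd hj (by decide)
    rw [decodeLam, hfind]
  | inr w =>
    simp only [Sum.elim_inr] at hy
    obtain ⟨hy1, hy2⟩ := hy
    have hne : ∀ v : Fin (K+1), ¬ (nn * (v:ℕ) = Sx) := by
      intro v hv
      have h1 : nn * (w:ℕ) < nn * (v:ℕ) := by omega
      have h2 : nn * (v:ℕ) < nn * ((w:ℕ)+1) := by omega
      have h3 : (w:ℕ) < (v:ℕ) := by
        by_contra hc
        have : nn * (v:ℕ) ≤ nn * (w:ℕ) :=
          Nat.mul_le_mul_left nn (by omega)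
        omega
      have h4 : (v:ℕ) < (w:ℕ) + 1 := by
        by_contra hc
        have : nn * ((w:ℕ)+1) ≤ nn * (v:ℕ) :=
          Nat.mul_le_mul_left nn (by omega)
        omega
      omega
    have hfind : Fin.find? (fun v : Fin (K+1) => decide (expectLam nn Sx v = 2)) = none := by
      rw [Fin.find?_eq_none_iff]
      intro v
      rw [decide_eq_false_iff_not]
      rw [expectLam]
      split
      · exact (by decide : ¬ ((0:Fin 3) = 2))
      · split
        · exact (by decide : ¬ ((1:Fin 3) = 2))
        · rename_i hA hB
          exfalso
          exact hne v (by omega)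
    have hcnt : (Finset.univ.filter (fun v : Fin (K+1) => expectLam nn Sx v = 0)).card
        = (w:ℕ) + 1 := by
      have hset : (Finset.univ.filter (fun v : Fin (K+1) => expectLam nn Sx v = 0)) =
          (Finset.univ.filter (fun v : Fin (K+1) => (v:ℕ) < (w:ℕ) + 1)) := by
        apply Finset.filter_congr
        intro v _
        rw [expectLam]
        constructor
        · intro hv
          by_contra hc
          have hge : (w:ℕ) + 1 ≤ (v:ℕ) := by omega
          have : nn * ((w:ℕ)+1) ≤ nn * (v:ℕ) := Nat.mul_le_mul_left nn hge
          rw [if_neg (by omega)] at hv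
          split at hv
          · exact absurd hv (by decide)
          · exact absurd hv (by decide)
        · intro hv
          have hle : (v:ℕ) ≤ (w:ℕ) := by omega
          have : nn * (v:ℕ) ≤ nn * (w:ℕ) := Nat.mul_le_mul_left nn hle
          rw [if_pos (by omega)]
      rw [hset]
      exact card_filter_lt ((w:ℕ)+1) (by have := w.isLt; omega)
    rw [decodeLam, hfind]
    simp only [hcnt]
    have hw : (w:ℕ) + 1 - 1 < K := by have := w.isLt; omega
    rw [dif_pos hw]
    congr 1

end IA

namespace IA
section Run
variable {K n : ℕ} (N : PortNetwork n) (x : Fin n → Fin (K + 1))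

lemma bridge (v : Lvl K) :
    MT0 x v true + (∑ i, min ((x i):ℕ) (v:ℕ)) = (∑ i, ((x i):ℕ)) ∧
    ST0 x v true + (∑ i, min ((x i):ℕ) (v:ℕ)) = n * (v:ℕ) := by
  constructor
  · rw [MT0, ← Finset.sum_add_distrib]
    apply Finset.sum_congr rfl
    intro i _
    have h : mob0 (x i) v true = ((x i):ℕ) - (v:ℕ) := by simp [mob0]
    omega
  · rw [ST0, ← Finset.sum_add_distrib]
    have h2 : ∑ _i : Fin n, (v:ℕ) = n * (v:ℕ) := by
      rw [Finset.sum_const, Finset.card_univ, Fintype.card_fin, smul_eq_mul]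
    rw [← h2]
    apply Finset.sum_congr rfl
    intro i _
    have h : stat0 (x i) v true = (v:ℕ) - ((x i):ℕ) := by simp [stat0]
    omega

section Orbit
variable (T p : ℕ) (hp : 0 < p) (hper : ∀ t, T ≤ t → RR N x (t + p) = RR N x t)

include hp hper in
lemma lam_expect (hn : 2 ≤ n) (i : Fin n) (v : Lvl K) :
    ∃ T2, ∀ t, T2 ≤ t → lamv N x t i v = expectLam n (∑ j, ((x j):ℕ)) v := by
  obtain ⟨hb1, hb2⟩ := bridge x v
  rcases Nat.lt_trichotomy (n * (v:ℕ)) (∑ j, ((x j):ℕ)) with hlt | heq | hgt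
  · have hwin : ST0 x v true < MT0 x v true := by omega
    obtain ⟨T2, hT2⟩ := lam_win N x T p hp hper hn v true hwin i
    refine ⟨T2, fun t ht => ?_⟩
    rw [hT2 t ht, expectLam, if_pos hlt]
    rfl
  · have heqb : MT0 x v true = ST0 x v true := by omega
    obtain ⟨T2, hT2⟩ := lam_bal N x T p hp hper hn v heqb i
    refine ⟨T2, fun t ht => ?_⟩
    rw [hT2 t ht, expectLam, if_neg (by omega), if_neg (by omega)]
  · have hwin : ST0 x v false < MT0 x v false := by
      have h1 := MT0_swap x v true
      have h2 := ST0_swap x v true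
      simp only [Bool.not_true] at h1 h2
      omega
    obtain ⟨T2, hT2⟩ := lam_win N x T p hp hper hn v false hwin i
    refine ⟨T2, fun t ht => ?_⟩
    rw [hT2 t ht, expectLam, if_neg (by omega), if_pos hgt]
    rfl

end Orbit

/-! ### the single-node case -/

lemma deg_zero_n1 (hn1 : n = 1) (i : Fin n) : N.deg i = 0 := by
  rw [PortNetwork.deg, Fintype.card_eq_zero_iff]
  refine ⟨fun jp => ?_⟩
  obtain ⟨j, hj⟩ := jp
  have hj1 := j.isLt
  have hi1 := i.isLt
  have : j = i := Fin.ext (by omega)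
  exact N.loopless i (this ▸ hj)

lemma acnt_n1 (hn1 : n = 1) (t : ℕ) (i : Fin n) (c : Cls K) : acnt N x t i c = 0 := by
  have h := acnt_le N x t i c
  rw [deg_zero_n1 N hn1 i] at h
  omega

lemma lam_n1 (hn1 : n = 1) (i : Fin n) (v : Lvl K) :
    ∀ t, 1 ≤ t → lamv N x t i v = lam0 (x i) v := by
  intro t ht
  induction t, ht using Nat.le_induction with
  | base => exact lam_one N x i v
  | succ t ht ih =>
    rw [lam_succ, acnt_n1 N x hn1, acnt_n1 N x hn1, acnt_n1 N x hn1,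
      elam_eq_lam N x t (by omega) i v, ih]
    simp

lemma lam0_expect (hn1 : n = 1) (i : Fin n) (v : Lvl K) :
    lam0 (x i) v = expectLam n (∑ j, ((x j):ℕ)) v := by
  have huniv : (Finset.univ : Finset (Fin n)) = {i} := by
    ext j
    simp only [Finset.mem_univ, Finset.mem_singleton, true_iff]
    have hj1 := j.isLt
    have hi1 := i.isLt
    exact Fin.ext (by omega)
  have hsum : (∑ j, ((x j):ℕ)) = ((x i):ℕ) := by
    rw [huniv, Finset.sum_singleton]
  rw [lam0, expectLam, hsum, hn1, one_mul]
  split_ifs <;> first | rfl | omega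

lemma y_eq (t : ℕ) (ht : 1 ≤ t) (i : Fin n) :
    yv N x t i = decodeLam (fun v => lamv N x t i v) := by
  obtain ⟨u, rfl⟩ : ∃ u, t = u + 1 := ⟨t - 1, by omega⟩
  exact y_succ N x u i

end Run
end IA

/-- proved: the interval-average family is computable. -/
theorem interval_average_computable' (K : ℕ)
    (f : ∀ n, (Fin n → Fin (K + 1)) → (Fin (K + 1) ⊕ Fin K))
    (hf : ∀ n, 0 < n → ∀ x : Fin n → Fin (K + 1),
      Sum.elim
        (fun v : Fin (K + 1) => (∑ i, ((x i : ℕ) : ℚ)) / (n : ℚ) = ((v : ℕ) : ℚ))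
        (fun v : Fin K => ((v : ℕ) : ℚ) < (∑ i, ((x i : ℕ) : ℚ)) / (n : ℚ) ∧
          (∑ i, ((x i : ℕ) : ℚ)) / (n : ℚ) < ((v : ℕ) : ℚ) + 1)
        (f n x)) :
    ComputableFamily f := by
  classical
  refine ⟨IA.MsgT K, IA.ZT K, IA.Alg K, inferInstance, inferInstance,
    fun d => inferInstance, ?_⟩
  intro n hn N x
  have hlam : ∀ (i : Fin n) (v : IA.Lvl K), ∃ T2, ∀ t, T2 ≤ t →
      IA.lamv N x t i v = IA.expectLam n (∑ j, ((x j : ℕ))) v := by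
    rcases Nat.lt_or_ge n 2 with h1 | h2
    · have hn1 : n = 1 := by omega
      intro i v
      refine ⟨1, fun t ht => ?_⟩
      rw [IA.lam_n1 N x hn1 i v t ht, IA.lam0_expect x hn1 i v]
    · obtain ⟨T, p, hp, hper⟩ := IA.exists_period N x
      intro i v
      exact IA.lam_expect N x T p hp hper h2 i v
  choose Tf hTf using fun iv : Fin n × IA.Lvl K => hlam iv.1 iv.2
  refine ⟨(Finset.univ.sup Tf) + 1, ?_⟩
  intro t ht i
  show IA.yv N x t i = f n x
  rw [IA.y_eq N x t (by omega) i]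
  have hfun : (fun v => IA.lamv N x t i v)
      = (fun v => IA.expectLam n (∑ j, ((x j):ℕ)) v) := by
    funext v
    refine hTf (i, v) t ?_
    have := Finset.le_sup (f := Tf) (Finset.mem_univ (i, v))
    omega
  rw [hfun]
  apply IA.decode_expected n _ hn (f n x)
  have hfx := hf n hn x
  have hn0 : ((n:ℚ)) ≠ 0 := Nat.cast_ne_zero.mpr (by omega)
  have hnpos : (0:ℚ) < (n:ℚ) := by positivity
  have hcast : (∑ i, (((x i):ℕ):ℚ)) = (((∑ j, ((x j):ℕ)) : ℕ) : ℚ) := by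
    push_cast
    rfl
  rcases hef : f n x with w | w
  · rw [hef] at hfx
    simp only [Sum.elim_inl] at hfx ⊢
    rw [hcast] at hfx
    have h1 : (((∑ j, ((x j):ℕ)) : ℕ) : ℚ) = ((w:ℕ):ℚ) * (n:ℚ) :=
      (div_eq_iff hn0).mp hfx
    have h2 : (∑ j, ((x j):ℕ)) = (w:ℕ) * n := by exact_mod_cast h1
    rw [h2, Nat.mul_comm]
  · rw [hef] at hfx
    simp only [Sum.elim_inr] at hfx ⊢
    rw [hcast] at hfx
    obtain ⟨hA, hB⟩ := hfx
    constructor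
    · have h1 : ((w:ℕ):ℚ) * (n:ℚ) < (((∑ j, ((x j):ℕ)) : ℕ) : ℚ) :=
        (lt_div_iff₀ hnpos).mp hA
      have h2 : (w:ℕ) * n < (∑ j, ((x j):ℕ)) := by exact_mod_cast h1
      have h3 : (w:ℕ) * n = n * (w:ℕ) := Nat.mul_comm _ _
      omega
    · have h1 : (((∑ j, ((x j):ℕ)) : ℕ) : ℚ) < (((w:ℕ):ℚ) + 1) * (n:ℚ) :=
        (div_lt_iff₀ hnpos).mp hB
      have h2 : (∑ j, ((x j):ℕ)) < ((w:ℕ) + 1) * n := by exact_mod_cast h1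
      have h3 : ((w:ℕ) + 1) * n = n * ((w:ℕ) + 1) := Nat.mul_comm _ _
      omega

/-- with `X = {0,…,K}` and `Y` the collection of intervals
`{0}, (0,1), {1}, …, (K-1,K), {K}` (indexed here by `Fin (K+1) ⊕ Fin K`, where
`Sum.inl v` stands for the singleton `{v}` and `Sum.inr v` for the open
interval `(v, v+1)`), the family mapping `x` to the element of `Y` containing
the average `(1/n) Σ_i x_i` is computable. -/
theorem interval_average_computable (K : ℕ)
    (f : ∀ n, (Fin n → Fin (K + 1)) → (Fin (K + 1) ⊕ Fin K))
    (hf : ∀ n, 0 < n → ∀ x : Fin n → Fin (K + 1),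
      Sum.elim
        (fun v : Fin (K + 1) => (∑ i, ((x i : ℕ) : ℚ)) / (n : ℚ) = ((v : ℕ) : ℚ))
        (fun v : Fin K => ((v : ℕ) : ℚ) < (∑ i, ((x i : ℕ) : ℚ)) / (n : ℚ) ∧
          (∑ i, ((x i : ℕ) : ℚ)) / (n : ℚ) < ((v : ℕ) : ℚ) + 1)
        (f n x)) :
    ComputableFamily f :=
  interval_average_computable' K f hf
end

section
/- Let X = {1,…,K} and Y = D ∩ ℚ^K (a countable set). The family of functions (f_n : X^n → Y)_{n≥1} defined by f_n(x) = (p_1(x), …, p_K(x)) — the vector of frequencies of the K possible initial values — is computable with infinite memory. -/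
namespace Freq

/-! ### Unary self-delimiting coding of naturals as bit streams -/

/-- unary code of a natural -/
def code (m : ℕ) : List Bool := List.replicate m true ++ [false]

def parseGo : List Bool → ℕ → List ℕ
  | [], _ => []
  | (true :: l), c => parseGo l (c + 1)
  | (false :: l), c => c :: parseGo l 0

/-- parse a bit stream into the list of completed unary codes -/
def parse (l : List Bool) : List ℕ := parseGo l 0

lemma parseGo_replicate (k : ℕ) (l : List Bool) (c : ℕ) :
    parseGo (List.replicate k true ++ l) c = parseGo l (c + k) := by
  induction k generalizing c with
  | zero => simp [parseGo]
  | succ k ih =>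
      rw [List.replicate_succ, List.cons_append]
      show parseGo (List.replicate k true ++ l) (c + 1) = _
      rw [ih]; congr 1; omega

lemma parseGo_replicate_nil (k c : ℕ) : parseGo (List.replicate k true) c = [] := by
  have := parseGo_replicate k [] c
  simpa [parseGo] using this

lemma parse_code_append (m : ℕ) (l : List Bool) :
    parse (code m ++ l) = m :: parse l := by
  simp [parse, code, parseGo_replicate, parseGo]

lemma parseGo_append_prefix (l r : List Bool) (c : ℕ) :
    parseGo l c <+: parseGo (l ++ r) c := by
  induction l generalizing c with
  | nil => simp [parseGo]
  | cons b l ih =>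
      cases b <;> simp only [List.cons_append, parseGo]
      · exact List.cons_prefix_cons.mpr ⟨rfl, ih 0⟩
      · exact ih _

lemma parse_prefix_append (l r : List Bool) : parse l <+: parse (l ++ r) :=
  parseGo_append_prefix l r 0

/-- key lemma: parsing a truncation of a concatenation of codes yields
a prefix of the list of coded numbers, of predictable length. -/
lemma parse_take_flatten (L : List ℕ) (s : ℕ) :
    ∃ a, parse (((L.map code).flatten).take s) = L.take a ∧
      (∀ b, b ≤ L.length → ((L.take b).map code).flatten.length ≤ s → b ≤ a) := by
  induction L generalizing s with
  | nil =>
      refine ⟨0, by simp [parse, parseGo], ?_⟩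
      intro b hb _; simpa using hb
  | cons m L ih =>
      by_cases hs : s ≤ m
      · refine ⟨0, ?_, ?_⟩
        · have : ((((m :: L).map code).flatten).take s) = List.replicate s true := by
            simp only [List.map_cons, List.flatten_cons, code]
            rw [List.append_assoc, List.take_append_of_le_length (by simp [hs]),
              List.take_replicate]
            congr 1; omega
          rw [this]
          simp [parse, parseGo_replicate_nil]
        · intro b hb hlen
          rcases Nat.eq_zero_or_pos b with h | h
          · omega
          · exfalso
            obtain ⟨b', rfl⟩ : ∃ b', b = b' + 1 := ⟨b - 1, by omega⟩
            rw [List.take_succ_cons] at hlen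
            simp [code] at hlen
            omega
      · push_neg at hs
        obtain ⟨s', rfl⟩ : ∃ s', s = (m + 1) + s' := ⟨s - (m+1), by omega⟩
        obtain ⟨a, ha, hmax⟩ := ih s'
        refine ⟨a + 1, ?_, ?_⟩
        · have hlen : (code m).length = m + 1 := by simp [code]
          have : (((m :: L).map code).flatten).take ((m+1) + s')
              = code m ++ ((L.map code).flatten).take s' := by
            simp only [List.map_cons, List.flatten_cons]
            rw [List.take_append]
            congr 1
            · rw [List.take_of_length_le (by omega)]
            · congr 1; omega
          rw [this, parse_code_append, ha]
          simp
        · intro b hb hlen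
          rcases Nat.eq_zero_or_pos b with h | h
          · omega
          · obtain ⟨b', rfl⟩ : ∃ b', b = b' + 1 := ⟨b - 1, by omega⟩
            rw [List.take_succ_cons] at hlen
            have : (((L.take b').map code).flatten).length ≤ s' := by
              simp [code] at hlen ⊢; omega
            have := hmax b' (by simpa using hb) this
            omega

end Freq
/-! ### Network primitives -/

namespace Freq

variable {n : ℕ}

/-- the neighbor of `i` behind port `p` -/
def nbr (N : PortNetwork n) (i : Fin n) (p : Fin (N.deg i)) : Fin n :=
  ((N.port i).symm p).1

lemma adj_nbr (N : PortNetwork n) (i : Fin n) (p : Fin (N.deg i)) :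
    N.adj i (nbr N i p) := ((N.port i).symm p).2

/-- the port of the neighbor behind port `p` of `i` that leads back to `i` -/
def bp (N : PortNetwork n) (i : Fin n) (p : Fin (N.deg i)) :
    Fin (N.deg (nbr N i p)) :=
  N.port (nbr N i p) ⟨i, N.symm _ _ (adj_nbr N i p)⟩

lemma nbr_bp (N : PortNetwork n) (i : Fin n) (p : Fin (N.deg i)) :
    nbr N (nbr N i p) (bp N i p) = i := by
  exact congrArg Subtype.val ((N.port (nbr N i p)).symm_apply_apply ⟨i, N.symm _ _ (adj_nbr N i p)⟩)

lemma exists_port_of_adj {N : PortNetwork n} {i j : Fin n} (h : N.adj i j) :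
    ∃ p, nbr N i p = j :=
  ⟨N.port i ⟨j, h⟩, by simp [nbr]⟩

/-- congruence helper for `nbr` -/
lemma nbr_congr (N : PortNetwork n) {a a' : Fin n} (h : a = a')
    {q : Fin (N.deg a)} {q' : Fin (N.deg a')} (hq : (q : ℕ) = (q' : ℕ)) :
    nbr N a q = nbr N a' q' := by
  subst h
  obtain rfl : q = q' := Fin.ext hq
  rfl

/-! ### Views -/

variable {K : ℕ}

/-- the depth-`k` view of node `i`, encoded as a natural number.  Every level
carries the input value on top; level `k+1` carries the level-`k` view and the
list, over ports `p`, of the back-port and the neighbor's level-`k` view. -/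
def view (N : PortNetwork n) (x : Fin n → Fin K) : ℕ → Fin n → ℕ
  | 0, i => Nat.pair (x i) (N.deg i)
  | (k+1), i => Nat.pair (x i) (Nat.pair (view N x k i)
      (Encodable.encode (List.ofFn fun p : Fin (N.deg i) =>
        Nat.pair (bp N i p) (view N x k (nbr N i p)))))

variable {N : PortNetwork n} {x : Fin n → Fin K}

lemma view_fst (k : ℕ) (i : Fin n) : (view N x k i).unpair.1 = (x i : ℕ) := by
  cases k <;> simp [view]

lemma x_eq_of_view {k : ℕ} {i j : Fin n} (h : view N x k i = view N x k j) :
    x i = x j := by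
  have h1 := view_fst (N := N) (x := x) k i
  have h2 := view_fst (N := N) (x := x) k j
  rw [h] at h1
  exact Fin.ext (by omega)

lemma deg_eq_of_view {k : ℕ} {i j : Fin n} (h : view N x k i = view N x k j) :
    N.deg i = N.deg j := by
  cases k with
  | zero =>
      simp only [view, Nat.pair_eq_pair] at h
      exact h.2
  | succ k =>
      simp only [view, Nat.pair_eq_pair] at h
      have henc := h.2.2
      have hlist := Encodable.encode_injective henc
      have := congrArg List.length hlist
      simpa using this

lemma ofFn_eq_iff {d d' : ℕ} (h : d = d') (f : Fin d → ℕ) (g : Fin d' → ℕ) :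
    List.ofFn f = List.ofFn g ↔ ∀ p, f p = g (Fin.cast h p) := by
  subst h
  rw [List.ofFn_inj]
  constructor
  · rintro rfl p; rfl
  · intro hp; funext p; exact hp p

lemma view_succ_iff {k : ℕ} {i j : Fin n} :
    view N x (k+1) i = view N x (k+1) j ↔
      ∃ hd : N.deg i = N.deg j, view N x k i = view N x k j ∧
        ∀ p : Fin (N.deg i),
          (bp N i p : ℕ) = (bp N j (Fin.cast hd p) : ℕ) ∧
          view N x k (nbr N i p) = view N x k (nbr N j (Fin.cast hd p)) := by
  constructor
  · intro h
    have hd : N.deg i = N.deg j := deg_eq_of_view h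
    have hx : (x i : ℕ) = (x j : ℕ) := by
      simp only [view, Nat.pair_eq_pair] at h; exact h.1
    simp only [view, Nat.pair_eq_pair] at h
    have hv : view N x k i = view N x k j := h.2.1
    have hlist := Encodable.encode_injective h.2.2
    rw [ofFn_eq_iff hd] at hlist
    refine ⟨hd, hv, fun p => ?_⟩
    have := hlist p
    rw [Nat.pair_eq_pair] at this
    exact this
  · rintro ⟨hd, hv, hp⟩
    have hx : (x i : ℕ) = (x j : ℕ) := by
      have := x_eq_of_view hv; exact congrArg Fin.val this
    simp only [view, Nat.pair_eq_pair]
    refine ⟨hx, hv, ?_⟩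
    congr 1
    rw [ofFn_eq_iff hd]
    intro p
    rw [Nat.pair_eq_pair]
    exact hp p

lemma view_mono {k : ℕ} {i j : Fin n}
    (h : view N x (k+1) i = view N x (k+1) j) :
    view N x k i = view N x k j := by
  obtain ⟨_, hv, _⟩ := view_succ_iff.mp h
  exact hv

lemma view_le {k m : ℕ} (hkm : k ≤ m) {i j : Fin n}
    (h : view N x m i = view N x m j) :
    view N x k i = view N x k j := by
  obtain ⟨t, rfl⟩ := Nat.exists_eq_add_of_le hkm
  induction t with
  | zero => exact h
  | succ t ih => exact ih (by omega) (view_mono h)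

end Freq
/-! ### Stabilization of the view equivalence -/

namespace Freq

variable {n K : ℕ} {N : PortNetwork n} {x : Fin n → Fin K}

/-- the view equivalence is fully determined at a stable level -/
def Stable (N : PortNetwork n) (x : Fin n → Fin K) (k : ℕ) : Prop :=
  ∀ i j, view N x k i = view N x k j → ∀ m, view N x m i = view N x m j

/-- the view relation as a finset of pairs -/
def rel (N : PortNetwork n) (x : Fin n → Fin K) (k : ℕ) : Finset (Fin n × Fin n) :=
  Finset.univ.filter (fun ij => view N x k ij.1 = view N x k ij.2)

lemma rel_anti {k m : ℕ} (h : k ≤ m) : rel N x m ⊆ rel N x k := by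
  intro ij hij
  simp only [rel, Finset.mem_filter, Finset.mem_univ, true_and] at hij ⊢
  exact view_le h hij

lemma stable_of_step {k : ℕ}
    (hk : ∀ i j, view N x k i = view N x k j → view N x (k+1) i = view N x (k+1) j) :
    Stable N x k := by
  have main : ∀ t i j, view N x (k+t) i = view N x (k+t) j →
      view N x (k+t+1) i = view N x (k+t+1) j := by
    intro t
    induction t with
    | zero => exact hk
    | succ t ih =>
        intro i j h
        obtain ⟨hd, hv, hp⟩ := view_succ_iff.mp h
        rw [view_succ_iff]
        exact ⟨hd, h, fun p => ⟨(hp p).1, ih _ _ (hp p).2⟩⟩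
  -- hence all levels ≥ k agree with level k
  have up : ∀ t i j, view N x k i = view N x k j → view N x (k+t) i = view N x (k+t) j := by
    intro t
    induction t with
    | zero => intro i j h; exact h
    | succ t ih => intro i j h; exact main t i j (ih i j h)
  intro i j h m
  rcases le_or_gt m k with hm | hm
  · exact view_le hm h
  · obtain ⟨t, rfl⟩ := Nat.exists_eq_add_of_le hm.le
    exact up t i j h

lemma exists_stable (N : PortNetwork n) (x : Fin n → Fin K) :
    ∃ k, Stable N x k := by
  have : ∃ k₁ k₂ : ℕ, k₁ ≠ k₂ ∧ rel N x k₁ = rel N x k₂ :=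
    Finite.exists_ne_map_eq_of_infinite (fun k => rel N x k)
  obtain ⟨k₁, k₂, hne, heq⟩ := this
  wlog hlt : k₁ < k₂ generalizing k₁ k₂
  · exact this k₂ k₁ hne.symm heq.symm (by omega)
  refine ⟨k₁, stable_of_step fun i j h => ?_⟩
  have h1 : (i, j) ∈ rel N x k₁ := by
    simp [rel, h]
  have h2 : (i, j) ∈ rel N x (k₁ + 1) := by
    have hm : (i, j) ∈ rel N x k₂ := heq ▸ h1
    exact rel_anti (by omega) hm
  simpa [rel] using h2

/-! ### All classes have the same size -/

/-- the view-equivalence class of `i` at level `k` -/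
def cls (N : PortNetwork n) (x : Fin n → Fin K) (k : ℕ) (i : Fin n) : Finset (Fin n) :=
  Finset.univ.filter (fun j => view N x k j = view N x k i)

lemma mem_cls {k : ℕ} {i j : Fin n} :
    j ∈ cls N x k i ↔ view N x k j = view N x k i := by
  simp [cls]

lemma stable_nbr {k : ℕ} (hst : Stable N x k) {i j : Fin n}
    (h : view N x k i = view N x k j) :
    ∃ hd : N.deg i = N.deg j, ∀ p : Fin (N.deg i),
      (bp N i p : ℕ) = (bp N j (Fin.cast hd p) : ℕ) ∧
      view N x k (nbr N i p) = view N x k (nbr N j (Fin.cast hd p)) := by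
  have := hst i j h (k+1)
  obtain ⟨hd, _, hp⟩ := view_succ_iff.mp this
  exact ⟨hd, hp⟩

lemma card_cls_le_nbr {k : ℕ} (hst : Stable N x k) (i : Fin n) (p : Fin (N.deg i)) :
    (cls N x k i).card ≤ (cls N x k (nbr N i p)).card := by
  classical
  set φ : Fin n → Fin n := fun j =>
    if h : view N x k j = view N x k i then
      nbr N j (Fin.cast (deg_eq_of_view h).symm p) else j with hφ
  apply Finset.card_le_card_of_injOn φ
  · intro j hj
    rw [Finset.mem_coe, mem_cls] at hj
    rw [Finset.mem_coe, mem_cls]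
    simp only [hφ, dif_pos hj]
    obtain ⟨hd, hp⟩ := stable_nbr hst hj
    have e : Fin.cast hd (Fin.cast (deg_eq_of_view hj).symm p) = p := Fin.ext rfl
    have h2 := (hp (Fin.cast (deg_eq_of_view hj).symm p)).2
    rw [e] at h2
    exact h2.symm ▸ rfl
  · intro j hj j' hj' hjj'
    rw [Finset.mem_coe, mem_cls] at hj hj'
    simp only [hφ, dif_pos hj, dif_pos hj'] at hjj'
    obtain ⟨hd, hp⟩ := stable_nbr hst hj
    obtain ⟨hd', hp'⟩ := stable_nbr hst hj'
    set q := Fin.cast (deg_eq_of_view hj).symm p with hq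
    set q' := Fin.cast (deg_eq_of_view hj').symm p with hq'
    have hb : (bp N j q : ℕ) = (bp N j' q' : ℕ) := by
      have h1 := (hp q).1
      have h2 := (hp' q').1
      have e1 : Fin.cast hd q = p := by ext; simp [hq]
      have e2 : Fin.cast hd' q' = p := by ext; simp [hq']
      rw [e1] at h1
      rw [e2] at h2
      omega
    calc j = nbr N (nbr N j q) (bp N j q) := (nbr_bp N j q).symm
    _ = nbr N (nbr N j' q') (bp N j' q') := nbr_congr N hjj' hb
    _ = j' := nbr_bp N j' q'

lemma card_cls_eq_nbr {k : ℕ} (hst : Stable N x k) (i : Fin n) (p : Fin (N.deg i)) :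
    (cls N x k i).card = (cls N x k (nbr N i p)).card := by
  refine le_antisymm (card_cls_le_nbr hst i p) ?_
  have := card_cls_le_nbr hst (nbr N i p) (bp N i p)
  rwa [nbr_bp] at this

lemma card_cls_eq {k : ℕ} (hst : Stable N x k) (i j : Fin n) :
    (cls N x k i).card = (cls N x k j).card := by
  have hconn := N.connected i j
  induction hconn with
  | refl => rfl
  | tail _ hadj ih =>
      obtain ⟨p, rfl⟩ := exists_port_of_adj hadj
      rw [ih, card_cls_eq_nbr hst]

end Freq
/-! ### The frequency identity -/

namespace Freq

variable {n K : ℕ} {N : PortNetwork n} {x : Fin n → Fin K}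

lemma n_eq_card_mul {k : ℕ} (hst : Stable N x k) (i₀ : Fin n) :
    n = (Finset.univ.image (view N x k)).card * (cls N x k i₀).card := by
  classical
  have h := Finset.card_eq_sum_card_fiberwise
    (f := view N x k) (s := (Finset.univ : Finset (Fin n)))
    (t := Finset.univ.image (view N x k))
    (fun i _ => Finset.mem_image_of_mem _ (Finset.mem_univ i))
  rw [Finset.card_univ, Fintype.card_fin] at h
  have hsum : ∑ c ∈ Finset.univ.image (view N x k),
      (Finset.univ.filter (fun i => view N x k i = c)).card
      = ∑ _c ∈ Finset.univ.image (view N x k), (cls N x k i₀).card := by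
    refine Finset.sum_congr rfl fun c hc => ?_
    obtain ⟨j, _, rfl⟩ := Finset.mem_image.mp hc
    have he : Finset.univ.filter (fun i => view N x k i = view N x k j) = cls N x k j := rfl
    rw [he, card_cls_eq hst]
  rw [hsum, Finset.sum_const, smul_eq_mul] at h
  exact h

lemma count_eq_card_mul {k : ℕ} (hst : Stable N x k) (i₀ : Fin n) (v : Fin K) :
    (Finset.univ.filter (fun i => x i = v)).card =
      ((Finset.univ.image (view N x k)).filter
        (fun c => c.unpair.1 = (v : ℕ))).card * (cls N x k i₀).card := by
  classical
  have h := Finset.card_eq_sum_card_fiberwise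
    (f := view N x k) (s := Finset.univ.filter (fun i => x i = v))
    (t := Finset.univ.image (view N x k))
    (fun i _ => Finset.mem_image_of_mem _ (Finset.mem_univ i))
  have hsum : ∑ c ∈ Finset.univ.image (view N x k),
      ((Finset.univ.filter (fun i => x i = v)).filter (fun i => view N x k i = c)).card
      = ∑ c ∈ Finset.univ.image (view N x k),
        (if c.unpair.1 = (v : ℕ) then (cls N x k i₀).card else 0) := by
    refine Finset.sum_congr rfl fun c hc => ?_
    obtain ⟨j, _, rfl⟩ := Finset.mem_image.mp hc
    by_cases hv : (view N x k j).unpair.1 = (v : ℕ)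
    · rw [if_pos hv]
      have hxj : x j = v := by
        have := view_fst (N := N) (x := x) k j
        exact Fin.ext (by omega)
      have : (Finset.univ.filter (fun i => x i = v)).filter
          (fun i => view N x k i = view N x k j) = cls N x k j := by
        ext i
        simp only [Finset.mem_filter, Finset.mem_univ, true_and, mem_cls]
        constructor
        · exact fun h => h.2
        · intro h
          exact ⟨(x_eq_of_view h).trans hxj, h⟩
      rw [this, card_cls_eq hst]
    · rw [if_neg hv, Finset.card_eq_zero]
      ext i
      simp only [Finset.mem_filter, Finset.mem_univ, true_and, Finset.notMem_empty,
        iff_false, not_and]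
      intro hxi hvi
      apply hv
      have h1 := view_fst (N := N) (x := x) k i
      rw [hvi] at h1
      rw [h1, hxi]
  rw [h, hsum, ← Finset.sum_filter, Finset.sum_const, smul_eq_mul]

lemma cls_card_pos (k : ℕ) (i₀ : Fin n) : 0 < (cls N x k i₀).card :=
  Finset.card_pos.mpr ⟨i₀, mem_cls.mpr rfl⟩

/-- the key identity: the proportion of classes with value `v` equals the
proportion of nodes with value `v`. -/
lemma freq_ratio {k : ℕ} (hst : Stable N x k) (hn : 0 < n) (v : Fin K) :
    (((Finset.univ.image (view N x k)).filter
        (fun c => c.unpair.1 = (v : ℕ))).card : ℚ) /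
      ((Finset.univ.image (view N x k)).card : ℚ)
    = ((Finset.univ.filter (fun i => x i = v)).card : ℚ) / (n : ℚ) := by
  have i₀ : Fin n := ⟨0, hn⟩
  have h1 := n_eq_card_mul hst i₀
  have h2 := count_eq_card_mul hst i₀ v
  have hs : 0 < (cls N x k i₀).card := cls_card_pos k i₀
  have hL : 0 < (Finset.univ.image (view N x k)).card := by
    refine Finset.card_pos.mpr ⟨view N x k i₀, Finset.mem_image_of_mem _ (Finset.mem_univ _)⟩
  have hq1 : (n : ℚ) = ((Finset.univ.image (view N x k)).card : ℚ)
      * ((cls N x k i₀).card : ℚ) := by exact_mod_cast h1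
  have hq2 : ((Finset.univ.filter (fun i => x i = v)).card : ℚ)
      = (((Finset.univ.image (view N x k)).filter
          (fun c => c.unpair.1 = (v : ℕ))).card : ℚ)
        * ((cls N x k i₀).card : ℚ) := by exact_mod_cast h2
  have hsq : (0:ℚ) < ((cls N x k i₀).card : ℚ) := by exact_mod_cast hs
  have hLq : (0:ℚ) < ((Finset.univ.image (view N x k)).card : ℚ) := by exact_mod_cast hL
  rw [hq1, hq2, div_eq_div_iff hLq.ne' (by positivity)]
  ring

/-! ### Balls and extraction of all views from a deep view -/

def ball (N : PortNetwork n) : ℕ → Fin n → Finset (Fin n)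
  | 0, i => {i}
  | (r+1), i => insert i (Finset.univ.biUnion fun p : Fin (N.deg i) => ball N r (nbr N i p))

lemma mem_ball_succ {N : PortNetwork n} {r : ℕ} {i j : Fin n} :
    j ∈ ball N (r+1) i ↔ j = i ∨ ∃ p, j ∈ ball N r (nbr N i p) := by
  show j ∈ insert i (Finset.univ.biUnion fun p : Fin (N.deg i) => ball N r (nbr N i p)) ↔ _
  simp

lemma mem_ball_self (N : PortNetwork n) (r : ℕ) (i : Fin n) : i ∈ ball N r i := by
  cases r
  · simp [ball]
  · exact mem_ball_succ.mpr (Or.inl rfl)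

lemma ball_mono (N : PortNetwork n) : ∀ (r : ℕ) (i : Fin n), ball N r i ⊆ ball N (r+1) i
  | 0, i => by
      intro j hj
      simp only [ball, Finset.mem_singleton] at hj
      exact mem_ball_succ.mpr (Or.inl hj)
  | (r+1), i => by
      intro j hj
      rcases mem_ball_succ.mp hj with h | ⟨p, hp⟩
      · exact mem_ball_succ.mpr (Or.inl h)
      · exact mem_ball_succ.mpr (Or.inr ⟨p, ball_mono N r (nbr N i p) hp⟩)

lemma ball_mono' (N : PortNetwork n) {r r' : ℕ} (h : r ≤ r') (i : Fin n) :
    ball N r i ⊆ ball N r' i := by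
  obtain ⟨t, rfl⟩ := Nat.exists_eq_add_of_le h
  induction t with
  | zero => exact fun _ h => h
  | succ t ih => exact fun j hj => ball_mono N (r+t) i (ih (by omega) hj)

lemma ball_step {N : PortNetwork n} {j' j : Fin n} (hadj : N.adj j' j) :
    ∀ (r : ℕ) (i : Fin n), j' ∈ ball N r i → j ∈ ball N (r+1) i
  | 0, i => by
      intro hj'
      simp only [ball, Finset.mem_singleton] at hj'
      subst hj'
      obtain ⟨p, rfl⟩ := exists_port_of_adj hadj
      exact mem_ball_succ.mpr (Or.inr ⟨p, by simp [ball]⟩)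
  | (r+1), i => by
      intro hj'
      rcases mem_ball_succ.mp hj' with h | ⟨p, hp⟩
      · subst h
        obtain ⟨p, rfl⟩ := exists_port_of_adj hadj
        exact mem_ball_succ.mpr (Or.inr ⟨p, mem_ball_self N _ _⟩)
      · exact mem_ball_succ.mpr (Or.inr ⟨p, ball_step hadj r (nbr N i p) hp⟩)

lemma exists_ball_all (N : PortNetwork n) (hn : 0 < n) :
    ∃ R, ∀ i j : Fin n, j ∈ ball N R i := by
  classical
  have hper : ∀ i j : Fin n, ∃ r, j ∈ ball N r i := by
    intro i j
    have hconn := N.connected i j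
    induction hconn with
    | refl => exact ⟨0, mem_ball_self N 0 i⟩
    | tail _ hadj ih =>
        obtain ⟨r, hr⟩ := ih
        exact ⟨r + 1, ball_step hadj r i hr⟩
  choose r hr using hper
  refine ⟨Finset.univ.sup (fun ij : Fin n × Fin n => r ij.1 ij.2), fun i j => ?_⟩
  refine ball_mono' N ?_ i (hr i j)
  exact Finset.le_sup (f := fun ij : Fin n × Fin n => r ij.1 ij.2) (Finset.mem_univ (i, j))

/-! pure extraction functions on codes -/

def decodeL (m : ℕ) : List ℕ := (Encodable.decode (α := List ℕ) m).getD []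

def down (c : ℕ) : ℕ := c.unpair.2.unpair.1

def chl (c : ℕ) : List ℕ := (decodeL c.unpair.2.unpair.2).map (fun e => e.unpair.2)

def downN : ℕ → ℕ → ℕ
  | 0, c => c
  | (r+1), c => downN r (down c)

def ExtF : ℕ → ℕ → Finset ℕ
  | 0, c => {c}
  | (r+1), c => insert (downN (r+1) c) ((chl c).foldr (fun a acc => ExtF r a ∪ acc) ∅)

lemma down_view (k : ℕ) (i : Fin n) : down (view N x (k+1) i) = view N x k i := by
  simp [down, view]

lemma downN_view : ∀ (t k : ℕ) (i : Fin n), downN t (view N x (k+t) i) = view N x k i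
  | 0, k, i => rfl
  | (t+1), k, i => by
      show downN t (down (view N x (k+t+1) i)) = view N x k i
      rw [down_view (k+t) i]
      exact downN_view t k i

lemma chl_view (k : ℕ) (i : Fin n) :
    chl (view N x (k+1) i) = List.ofFn (fun p => view N x k (nbr N i p)) := by
  simp only [chl, view, Nat.unpair_pair, decodeL, Encodable.encodek, Option.getD_some,
    List.map_ofFn]
  congr 1
  funext p
  simp

lemma mem_foldr_union {F : ℕ → Finset ℕ} {l : List ℕ} {a : ℕ} :
    a ∈ l.foldr (fun c acc => F c ∪ acc) ∅ ↔ ∃ c ∈ l, a ∈ F c := by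
  induction l with
  | nil => simp
  | cons b l ih => simp [ih]

lemma ExtF_view : ∀ (r m : ℕ) (i : Fin n),
    ExtF r (view N x (m+r) i) = (ball N r i).image (view N x m)
  | 0, m, i => by simp [ExtF, ball]
  | (r+1), m, i => by
      have hd : downN (r+1) (view N x (m+(r+1)) i) = view N x m i := downN_view (r+1) m i
      have hc : chl (view N x (m+(r+1)) i)
          = List.ofFn (fun p => view N x (m+r) (nbr N i p)) := by
        have : m + (r+1) = (m+r) + 1 := by omega
        rw [this]
        exact chl_view (m+r) i
      ext a
      simp only [ExtF, Finset.mem_insert, mem_foldr_union, hd, hc, List.mem_ofFn,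
        ball, Finset.mem_image, Finset.mem_insert, Finset.mem_biUnion, Finset.mem_univ,
        true_and]
      constructor
      · rintro (rfl | ⟨c, ⟨p, rfl⟩, ha⟩)
        · exact ⟨i, Or.inl rfl, rfl⟩
        · rw [ExtF_view r m (nbr N i p)] at ha
          obtain ⟨j, hj, rfl⟩ := Finset.mem_image.mp ha
          exact ⟨j, Or.inr ⟨p, hj⟩, rfl⟩
      · rintro ⟨j, hj | ⟨p, hp⟩, rfl⟩
        · subst hj; exact Or.inl rfl
        · refine Or.inr ⟨view N x (m+r) (nbr N i p), ⟨p, rfl⟩, ?_⟩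
          rw [ExtF_view r m (nbr N i p)]
          exact Finset.mem_image_of_mem _ hp

lemma ExtF_univ {r m : ℕ} {i : Fin n} (hR : ∀ j, j ∈ ball N r i) :
    ExtF r (view N x (m+r) i) = Finset.univ.image (view N x m) := by
  rw [ExtF_view]
  congr 1
  exact Finset.eq_univ_iff_forall.mpr hR

end Freq
/-! ### The algorithm -/

namespace Freq

/-- the output type -/
abbrev Ysub (K : ℕ) := {p : Fin K → ℚ // (∀ k, 0 ≤ p k ∧ p k ≤ 1) ∧ ∑ k, p k = 1}

/-- internal memory: per-port emitted-count, and per-port received (pad-stripped) bits -/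
abbrev ZT : ℕ → Type := fun d => (Fin d → ℕ) × (Fin d → List Bool)

/-- number of own view levels computable from the parsed data -/
def ownLevels (d : ℕ) (dat : Fin d → List ℕ) : ℕ :=
  if h : (Finset.univ : Finset (Fin d)).Nonempty then
    1 + Finset.univ.inf' h (fun p => (dat p).length - 1)
  else 1

/-- own view computed from input value, degree, and parsed neighbor data -/
def ownView (d : ℕ) (xv : ℕ) (dat : Fin d → List ℕ) : ℕ → ℕ
  | 0 => Nat.pair xv d
  | (m+1) => Nat.pair xv (Nat.pair (ownView d xv dat m)
      (Encodable.encode (List.ofFn fun p : Fin d =>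
        Nat.pair ((dat p).getD 0 0) ((dat p).getD (m+1) 0))))

/-- the full bit string that a node of degree `d` with input `xv` and parsed
data `dat` is prepared to send on port `p` -/
def fullStr (d : ℕ) (xv : ℕ) (dat : Fin d → List ℕ) (p : Fin d) : List Bool :=
  code p.val ++ ((List.range (ownLevels d dat)).map fun m => code (ownView d xv dat m)).flatten

variable {K : ℕ}

def vfin (hK : 0 < K) (c : ℕ) : Fin K :=
  if h : c.unpair.1 < K then ⟨c.unpair.1, h⟩ else ⟨0, hK⟩

def outOf (f : ∀ n, (Fin n → Fin K) → Ysub K) (hK : 0 < K) (W : Finset ℕ) : Ysub K :=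
  f W.card (fun a => vfin hK ((W.sort (· ≤ ·)).getD a.val 0))

def computeY (f : ∀ n, (Fin n → Fin K) → Ysub K) (d : ℕ) (xv : Fin K)
    (dat : Fin d → List ℕ) (yold : Ysub K) : Ysub K :=
  if d = 0 then f 1 (fun _ => xv)
  else if hK : 0 < K then
    if 1 ≤ (ownLevels d dat - 1) / 2 then
      outOf f hK (ExtF ((ownLevels d dat - 1) / 2)
        (ownView d (xv : ℕ) dat (2 * ((ownLevels d dat - 1) / 2))))
    else yold
  else yold

/-- one transition step -/
def step (f : ∀ n, (Fin n → Fin K) → Ysub K) (d : ℕ) (xv : Fin K) (z : ZT d)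
    (y : Ysub K) (ms : Fin d → Option Bool) :
    ZT d × Ysub K × (Fin d → Option Bool) :=
  let bufs' : Fin d → List Bool := fun p => z.2 p ++ (ms p).elim [] (fun b => [b])
  let dat : Fin d → List ℕ := fun p => parse (bufs' p)
  let str : Fin d → List Bool := fun p => fullStr d (xv : ℕ) dat p
  ((fun p => if z.1 p < (str p).length then z.1 p + 1 else z.1 p, bufs'),
   computeY f d xv dat y,
   fun p => if z.1 p < (str p).length then some ((str p).getD (z.1 p) false) else none)

/-- the algorithm -/
def algo (f : ∀ n, (Fin n → Fin K) → Ysub K) :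
    Algorithm (Fin K) (Ysub K) (Option Bool) ZT where
  trans := fun d xv z y ms => step f d xv z y ms
  z0 := fun _ => (fun _ => 0, fun _ => [])
  y0 := f 0 (fun a => a.elim0)
  m0 := none

/-! basic lemmas about `ownLevels` -/

lemma ownLevels_pos (d : ℕ) (dat : Fin d → List ℕ) : 1 ≤ ownLevels d dat := by
  unfold ownLevels
  split <;> omega

lemma le_ownLevels {d m : ℕ} {dat : Fin d → List ℕ} (hd : 0 < d)
    (h : ∀ p : Fin d, m + 1 ≤ (dat p).length) : m + 1 ≤ ownLevels d dat := by
  unfold ownLevels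
  have hne : (Finset.univ : Finset (Fin d)).Nonempty :=
    ⟨⟨0, hd⟩, Finset.mem_univ _⟩
  rw [dif_pos hne]
  have : m ≤ Finset.univ.inf' hne (fun p => (dat p).length - 1) := by
    rw [Finset.le_inf'_iff]
    intro p _
    have := h p
    omega
  omega

lemma length_of_lt_ownLevels {d m : ℕ} {dat : Fin d → List ℕ}
    (h : m + 1 < ownLevels d dat) (p : Fin d) : m + 2 ≤ (dat p).length := by
  unfold ownLevels at h
  have hne : (Finset.univ : Finset (Fin d)).Nonempty := ⟨p, Finset.mem_univ _⟩
  rw [dif_pos hne] at h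
  have : Finset.univ.inf' hne (fun p => (dat p).length - 1) ≤ (dat p).length - 1 :=
    Finset.inf'_le _ (Finset.mem_univ p)
  omega

lemma ownLevels_mono {d : ℕ} {dat dat' : Fin d → List ℕ}
    (h : ∀ p, (dat p).length ≤ (dat' p).length) :
    ownLevels d dat ≤ ownLevels d dat' := by
  unfold ownLevels
  split
  case isTrue hne =>
    have hle : Finset.univ.inf' hne (fun p => (dat p).length - 1)
        ≤ Finset.univ.inf' hne (fun p => (dat' p).length - 1) := by
      rw [Finset.le_inf'_iff]
      intro p _
      have h2 : Finset.univ.inf' hne (fun p => (dat p).length - 1) ≤ (dat p).length - 1 :=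
        Finset.inf'_le _ (Finset.mem_univ p)
      have := h p
      omega
    omega
  case isFalse hne => exact le_refl 1

end Freq
/-! ### Analysis of the run -/

namespace Freq

section Run

variable {K : ℕ} (f : ∀ n, (Fin n → Fin K) → Ysub K) {n : ℕ}
  (N : PortNetwork n) (x : Fin n → Fin K)

def sentAt (t : ℕ) (i : Fin n) : Fin (N.deg i) → ℕ := ((algo f).run N x t i).1.1
def bufsAt (t : ℕ) (i : Fin n) : Fin (N.deg i) → List Bool := ((algo f).run N x t i).1.2
def yAt (t : ℕ) (i : Fin n) : Ysub K := ((algo f).run N x t i).2.1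
def msgAt (t : ℕ) (i : Fin n) : Fin (N.deg i) → Option Bool := ((algo f).run N x t i).2.2
def datAt (t : ℕ) (i : Fin n) : Fin (N.deg i) → List ℕ := fun p => parse (bufsAt f N x t i p)
def LvAt (t : ℕ) (i : Fin n) : ℕ := ownLevels (N.deg i) (datAt f N x t i)
def FAt (t : ℕ) (i : Fin n) (p : Fin (N.deg i)) : List Bool :=
  fullStr (N.deg i) (x i) (datAt f N x t i) p

lemma sentAt_zero (i : Fin n) (p : Fin (N.deg i)) : sentAt f N x 0 i p = 0 := rfl
lemma bufsAt_zero (i : Fin n) (p : Fin (N.deg i)) : bufsAt f N x 0 i p = [] := rfl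
lemma msgAt_zero (i : Fin n) (p : Fin (N.deg i)) : msgAt f N x 0 i p = none := rfl

lemma bufsAt_succ (t : ℕ) (i : Fin n) (p : Fin (N.deg i)) :
    bufsAt f N x (t+1) i p = bufsAt f N x t i p ++
      (msgAt f N x t (nbr N i p) (bp N i p)).elim [] (fun b => [b]) := rfl

lemma sentAt_succ (t : ℕ) (i : Fin n) (p : Fin (N.deg i)) :
    sentAt f N x (t+1) i p =
      if sentAt f N x t i p < (FAt f N x (t+1) i p).length
      then sentAt f N x t i p + 1 else sentAt f N x t i p := rfl

lemma msgAt_succ (t : ℕ) (i : Fin n) (p : Fin (N.deg i)) :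
    msgAt f N x (t+1) i p =
      if sentAt f N x t i p < (FAt f N x (t+1) i p).length
      then some ((FAt f N x (t+1) i p).getD (sentAt f N x t i p) false) else none := rfl

lemma yAt_succ (t : ℕ) (i : Fin n) :
    yAt f N x (t+1) i = computeY f (N.deg i) (x i) (datAt f N x (t+1) i) (yAt f N x t i) := rfl

end Run

end Freq
namespace Freq

section Run2

variable {K : ℕ} (f : ∀ n, (Fin n → Fin K) → Ysub K) {n : ℕ}
  (N : PortNetwork n) (x : Fin n → Fin K)

/-- the true sequence of numbers that node `i` receives on port `p` -/
def trueNum (i : Fin n) (p : Fin (N.deg i)) : ℕ → ℕ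
  | 0 => (bp N i p : ℕ)
  | (r+1) => view N x r (nbr N i p)

/-- the true bit string that node `i` sends on port `p`, through view level `L - 1` -/
def sStr (i : Fin n) (p : Fin (N.deg i)) (L : ℕ) : List Bool :=
  code p.val ++ ((List.range L).map fun m => code (view N x m i)).flatten

lemma sStr_eq_flatten (i : Fin n) (p : Fin (N.deg i)) (L : ℕ) :
    sStr N x (nbr N i p) (bp N i p) L
      = ((List.range (L+1)).map fun r => code (trueNum N x i p r)).flatten := by
  rw [List.range_succ_eq_map]
  simp only [sStr, List.map_cons, List.flatten_cons, List.map_map]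
  rfl

lemma sStr_prefix (i : Fin n) (p : Fin (N.deg i)) {L L' : ℕ} (h : L ≤ L') :
    sStr N x i p L <+: sStr N x i p L' := by
  have h1 : (List.range L').take L = List.range L := by
    rw [List.take_range]; congr 1; omega
  obtain ⟨rest, hrest⟩ : List.range L <+: List.range L' :=
    h1 ▸ List.take_prefix L (List.range L')
  rw [sStr, sStr, ← hrest, List.map_append, List.flatten_append, ← List.append_assoc]
  exact ⟨_, rfl⟩

/-- correctness of `ownView` given correct parsed data -/
lemma ownView_correct {i : Fin n} {dat : Fin (N.deg i) → List ℕ}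
    (hdat : ∀ p r, r < (dat p).length → (dat p).getD r 0 = trueNum N x i p r) :
    ∀ m, m < ownLevels (N.deg i) dat → ownView (N.deg i) (x i) dat m = view N x m i := by
  intro m
  induction m with
  | zero => intro _; rfl
  | succ m ih =>
      intro hm
      have hlen := length_of_lt_ownLevels hm
      have h1 : ownView (N.deg i) (x i) dat m = view N x m i := ih (by omega)
      have hfn : (List.ofFn fun p : Fin (N.deg i) =>
            Nat.pair ((dat p).getD 0 0) ((dat p).getD (m+1) 0))
          = List.ofFn fun p : Fin (N.deg i) =>
            Nat.pair ((bp N i p : ℕ)) (view N x m (nbr N i p)) := by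
        rw [List.ofFn_inj]
        funext p
        have e0 : (dat p).getD 0 0 = trueNum N x i p 0 := hdat p 0 (by have := hlen p; omega)
        have e1 : (dat p).getD (m+1) 0 = trueNum N x i p (m+1) :=
          hdat p (m+1) (by have := hlen p; omega)
        rw [e0, e1]
        rfl
      show Nat.pair ((x i : ℕ)) (Nat.pair (ownView (N.deg i) ((x i : ℕ)) dat m) _)
          = view N x (m+1) i
      rw [h1, hfn]
      rfl

/-- the data invariant: every parsed buffer is a correct prefix -/
def GoodDat (t : ℕ) : Prop :=
  ∀ (i : Fin n) (p : Fin (N.deg i)), ∃ a,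
    datAt f N x t i p = (List.range a).map (trueNum N x i p)

lemma GoodDat.getD {t : ℕ} (h : GoodDat f N x t) (i : Fin n) (p : Fin (N.deg i))
    (r : ℕ) (hr : r < (datAt f N x t i p).length) :
    (datAt f N x t i p).getD r 0 = trueNum N x i p r := by
  obtain ⟨a, ha⟩ := h i p
  rw [ha] at hr ⊢
  simp only [List.length_map, List.length_range] at hr
  rw [List.getD_eq_getElem _ _ (by simpa using hr)]
  simp

lemma FAt_eq_sStr {t : ℕ} (h : GoodDat f N x t) (i : Fin n) (p : Fin (N.deg i)) :
    FAt f N x t i p = sStr N x i p (LvAt f N x t i) := by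
  rw [FAt, fullStr, sStr]
  congr 1
  apply congrArg
  apply List.map_congr_left
  intro m hm
  rw [List.mem_range] at hm
  rw [ownView_correct N x (GoodDat.getD f N x h i) m hm]

lemma bufs_length_mono (t : ℕ) (i : Fin n) (p : Fin (N.deg i)) :
    (datAt f N x t i p).length ≤ (datAt f N x (t+1) i p).length := by
  rw [datAt, datAt, bufsAt_succ]
  exact (parse_prefix_append _ _).length_le

lemma LvAt_mono (t : ℕ) (i : Fin n) : LvAt f N x t i ≤ LvAt f N x (t+1) i :=
  ownLevels_mono (fun p => bufs_length_mono f N x t i p)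

lemma LvAt_mono' {t t' : ℕ} (h : t ≤ t') (i : Fin n) : LvAt f N x t i ≤ LvAt f N x t' i := by
  obtain ⟨s, rfl⟩ := Nat.exists_eq_add_of_le h
  induction s with
  | zero => exact le_refl _
  | succ s ih => exact le_trans (ih (by omega)) (LvAt_mono f N x (t+s) i)

lemma FAt_prefix {t : ℕ} (h : GoodDat f N x t) (h' : GoodDat f N x (t+1))
    (i : Fin n) (p : Fin (N.deg i)) :
    FAt f N x t i p <+: FAt f N x (t+1) i p := by
  rw [FAt_eq_sStr f N x h, FAt_eq_sStr f N x h']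
  exact sStr_prefix N x i p (LvAt_mono f N x t i)

/-- the main invariant of the run -/
theorem run_invariant : ∀ t : ℕ,
    (GoodDat f N x t) ∧
    (∀ (i : Fin n) (p : Fin (N.deg i)), sentAt f N x t i p ≤ (FAt f N x t i p).length) ∧
    (∀ (i : Fin n) (p : Fin (N.deg i)),
      bufsAt f N x (t+1) i p
        = (FAt f N x t (nbr N i p) (bp N i p)).take (sentAt f N x t (nbr N i p) (bp N i p))) := by
  intro t
  induction t with
  | zero =>
      refine ⟨fun i p => ⟨0, by simp [datAt, bufsAt_zero, parse, parseGo]⟩,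
        fun i p => by rw [sentAt_zero]; omega,
        fun i p => by rw [bufsAt_succ, bufsAt_zero, msgAt_zero, sentAt_zero]; rfl⟩
  | succ t ih =>
      obtain ⟨hGood, hSent, hBufs⟩ := ih
      have hGood' : GoodDat f N x (t+1) := by
        intro i p
        rw [datAt, hBufs i p, FAt_eq_sStr f N x hGood, sStr_eq_flatten]
        have hmm : ((List.range (LvAt f N x t (nbr N i p) + 1)).map
              fun r => code (trueNum N x i p r))
            = ((List.range (LvAt f N x t (nbr N i p) + 1)).map (trueNum N x i p)).map code := by
          rw [List.map_map]; rfl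
        rw [hmm]
        obtain ⟨a, ha, -⟩ := parse_take_flatten
          ((List.range (LvAt f N x t (nbr N i p) + 1)).map (trueNum N x i p))
          (sentAt f N x t (nbr N i p) (bp N i p))
        refine ⟨min a (LvAt f N x t (nbr N i p) + 1), ?_⟩
        rw [ha, ← List.map_take, List.take_range]
      refine ⟨hGood', ?_, ?_⟩
      · intro i p
        rw [sentAt_succ]
        split
        case isTrue h => omega
        case isFalse h =>
          calc sentAt f N x t i p ≤ (FAt f N x t i p).length := hSent i p
          _ ≤ (FAt f N x (t+1) i p).length := (FAt_prefix f N x hGood hGood' i p).length_le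
      · intro i p
        rw [bufsAt_succ, hBufs i p, msgAt_succ, sentAt_succ]
        set j := nbr N i p
        set q := bp N i p
        have hpre : FAt f N x t j q <+: FAt f N x (t+1) j q :=
          FAt_prefix f N x hGood hGood' j q
        have htake : (FAt f N x t j q).take (sentAt f N x t j q)
            = (FAt f N x (t+1) j q).take (sentAt f N x t j q) := by
          obtain ⟨r, hr⟩ := hpre
          rw [← hr, List.take_append_of_le_length (hSent j q)]
        rw [htake]
        split
        case isTrue h =>
          rw [List.take_succ]
          congr 1
          rw [List.getD_eq_getElem _ _ h, List.getElem?_eq_getElem h]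
          rfl
        case isFalse h => exact List.append_nil _
  
end Run2

end Freq
namespace Freq

section Run3

variable {K : ℕ} (f : ∀ n, (Fin n → Fin K) → Ysub K) {n : ℕ}
  (N : PortNetwork n) (x : Fin n → Fin K)

lemma sent_mono (t : ℕ) (i : Fin n) (p : Fin (N.deg i)) :
    sentAt f N x t i p ≤ sentAt f N x (t+1) i p := by
  rw [sentAt_succ]; split <;> omega

lemma sent_reach (i : Fin n) (p : Fin (N.deg i)) (len T : ℕ)
    (hT : ∀ t, T ≤ t → len ≤ (FAt f N x t i p).length) :
    ∀ t, T + len ≤ t → len ≤ sentAt f N x t i p := by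
  have key : ∀ s, min len s ≤ sentAt f N x (T + s) i p := by
    intro s
    induction s with
    | zero => omega
    | succ s ih =>
        rw [show T + (s+1) = (T+s)+1 from by omega]
        rcases le_or_gt len (sentAt f N x (T+s) i p) with h | h
        · have := sent_mono f N x (T+s) i p
          omega
        · have hlen : sentAt f N x (T+s) i p < (FAt f N x (T+s+1) i p).length :=
            lt_of_lt_of_le h (hT (T+s+1) (by omega))
          have : sentAt f N x ((T+s)+1) i p = sentAt f N x (T+s) i p + 1 := by
            rw [sentAt_succ, if_pos hlen]
          omega
  intro t ht
  obtain ⟨s, rfl⟩ := Nat.exists_eq_add_of_le (le_trans (Nat.le_add_right T len) ht)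
  have h2 := key s
  have hs : len ≤ s := by omega
  omega

/-- liveness: every node eventually computes arbitrarily many view levels -/
theorem live (hd : ∀ i : Fin n, 0 < N.deg i) :
    ∀ m, ∃ T, ∀ t, T ≤ t → ∀ i, m ≤ LvAt f N x t i := by
  intro m
  induction m with
  | zero => exact ⟨0, fun t _ i => by omega⟩
  | succ m ih =>
      obtain ⟨T, hT⟩ := ih
      have hF : ∀ t, T ≤ t → ∀ (i : Fin n) (p : Fin (N.deg i)),
          (sStr N x i p m).length ≤ (FAt f N x t i p).length := by
        intro t ht i p
        rw [FAt_eq_sStr f N x (run_invariant f N x t).1]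
        exact (sStr_prefix N x i p (hT t ht i)).length_le
      set Len := Finset.univ.sup
        (fun σ : Σ i : Fin n, Fin (N.deg i) => (sStr N x σ.1 σ.2 m).length) with hLen
      have hsent : ∀ t, T + Len ≤ t → ∀ (i : Fin n) (p : Fin (N.deg i)),
          (sStr N x i p m).length ≤ sentAt f N x t i p := by
        intro t ht i p
        have hle : (sStr N x i p m).length ≤ Len :=
          Finset.le_sup (f := fun σ : Σ i : Fin n, Fin (N.deg i) =>
            (sStr N x σ.1 σ.2 m).length) (Finset.mem_univ ⟨i, p⟩)
        exact sent_reach f N x i p _ T (fun t' ht' => hF t' ht' i p) t (by omega)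
      refine ⟨T + Len + 1, fun t ht i => ?_⟩
      obtain ⟨t', rfl⟩ : ∃ t', t = t' + 1 := ⟨t - 1, by omega⟩
      have ht' : T + Len ≤ t' := by omega
      apply le_ownLevels (hd i)
      intro p
      have hbufs := (run_invariant f N x t').2.2 i p
      have hgood := (run_invariant f N x t').1
      show m + 1 ≤ (datAt f N x (t'+1) i p).length
      rw [datAt, hbufs, FAt_eq_sStr f N x hgood, sStr_eq_flatten]
      have hmm : ((List.range (LvAt f N x t' (nbr N i p) + 1)).map fun r => code (trueNum N x i p r))
          = ((List.range (LvAt f N x t' (nbr N i p) + 1)).map (trueNum N x i p)).map code := by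
        rw [List.map_map]; rfl
      rw [hmm]
      obtain ⟨a, ha, hbound⟩ := parse_take_flatten
        ((List.range (LvAt f N x t' (nbr N i p) + 1)).map (trueNum N x i p)) (sentAt f N x t' (nbr N i p) (bp N i p))
      have hLv : m ≤ LvAt f N x t' (nbr N i p) := hT t' (by omega) (nbr N i p)
      have hb : m + 1 ≤ a := by
        apply hbound (m+1) (by simp; omega)
        have htake : ((List.range (LvAt f N x t' (nbr N i p) + 1)).map (trueNum N x i p)).take (m+1)
            = (List.range (m+1)).map (trueNum N x i p) := by
          rw [← List.map_take, List.take_range]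
          congr 2
          omega
        rw [htake]
        have hflat : (((List.range (m+1)).map (trueNum N x i p)).map code).flatten
            = sStr N x (nbr N i p) (bp N i p) m := by
          rw [sStr_eq_flatten, List.map_map]
          rfl
        rw [hflat]
        exact hsent t' ht' (nbr N i p) (bp N i p)
      rw [ha]
      simp only [List.length_take, List.length_map, List.length_range]
      omega

end Run3

end Freq
namespace Freq

section Run4

variable {K : ℕ} (f : ∀ n, (Fin n → Fin K) → Ysub K) {n : ℕ}
  (N : PortNetwork n) (x : Fin n → Fin K)

lemma stable_mono {k k' : ℕ} (h : Stable N x k) (hk : k ≤ k') : Stable N x k' :=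
  fun i j hv m => h i j (view_le hk hv) m

/-- correctness of the output extraction -/
lemma outOf_eq
    (hf : ∀ m, 0 < m → ∀ (z : Fin m → Fin K) (v : Fin K),
      ((f m z : Fin K → ℚ) v) = ((Finset.univ.filter fun i => z i = v).card : ℚ) / m)
    {k : ℕ} (hst : Stable N x k) (hn : 0 < n) (hK : 0 < K) :
    outOf f hK (Finset.univ.image (view N x k)) = f n x := by
  classical
  have hWpos : 0 < (Finset.univ.image (view N x k)).card :=
    Finset.card_pos.mpr ⟨view N x k ⟨0, hn⟩,
      Finset.mem_image_of_mem _ (Finset.mem_univ _)⟩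
  have hlen : ((Finset.univ.image (view N x k)).sort (· ≤ ·)).length
      = (Finset.univ.image (view N x k)).card := Finset.length_sort _
  have hmemK : ∀ c ∈ Finset.univ.image (view N x k), c.unpair.1 < K := by
    intro c hc
    obtain ⟨j, _, rfl⟩ := Finset.mem_image.mp hc
    rw [view_fst]
    exact (x j).isLt
  apply Subtype.ext
  funext v
  simp only [outOf]
  rw [hf _ hWpos _ v, hf n hn x v, ← freq_ratio hst hn v]
  congr 2
  refine Finset.card_bij
    (fun a _ => ((Finset.univ.image (view N x k)).sort (· ≤ ·)).getD a.val 0) ?_ ?_ ?_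
  · intro a ha
    rw [Finset.mem_filter] at ha
    have hlt : a.val < ((Finset.univ.image (view N x k)).sort (· ≤ ·)).length := by
      rw [hlen]; exact a.isLt
    have hcW : ((Finset.univ.image (view N x k)).sort (· ≤ ·)).getD a.val 0
        ∈ Finset.univ.image (view N x k) := by
      rw [List.getD_eq_getElem _ _ hlt]
      exact (Finset.mem_sort _).mp (List.getElem_mem hlt)
    rw [Finset.mem_filter]
    refine ⟨hcW, ?_⟩
    have hKc := hmemK _ hcW
    have hv := ha.2
    rw [vfin, dif_pos hKc] at hv
    exact congrArg Fin.val hv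
  · intro a1 ha1 a2 ha2 h
    have hlt1 : a1.val < ((Finset.univ.image (view N x k)).sort (· ≤ ·)).length := by
      rw [hlen]; exact a1.isLt
    have hlt2 : a2.val < ((Finset.univ.image (view N x k)).sort (· ≤ ·)).length := by
      rw [hlen]; exact a2.isLt
    rw [List.getD_eq_getElem _ _ hlt1, List.getD_eq_getElem _ _ hlt2] at h
    have h2 := ((Finset.sort_nodup (Finset.univ.image (view N x k)) (· ≤ ·)).get_inj_iff
      (i := ⟨a1.val, hlt1⟩) (j := ⟨a2.val, hlt2⟩)).mp (by simpa using h)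
    exact Fin.ext (by simpa using congrArg Fin.val h2)
  · intro c hc
    rw [Finset.mem_filter] at hc
    have hcs : c ∈ (Finset.univ.image (view N x k)).sort (· ≤ ·) :=
      (Finset.mem_sort _).mpr hc.1
    obtain ⟨idx, hidx⟩ := List.mem_iff_get.mp hcs
    refine ⟨⟨idx.val, by rw [← hlen]; exact idx.isLt⟩, ?_, ?_⟩
    · rw [Finset.mem_filter]
      refine ⟨Finset.mem_univ _, ?_⟩
      have hgd : ((Finset.univ.image (view N x k)).sort (· ≤ ·)).getD idx.val 0 = c := by
        rw [List.getD_eq_getElem _ _ idx.isLt]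
        rw [← hidx]
        rfl
      show vfin hK (((Finset.univ.image (view N x k)).sort (· ≤ ·)).getD idx.val 0) = v
      rw [hgd, vfin, dif_pos (hmemK c hc.1)]
      exact Fin.ext hc.2
    · show ((Finset.univ.image (view N x k)).sort (· ≤ ·)).getD idx.val 0 = c
      rw [List.getD_eq_getElem _ _ idx.isLt, ← hidx]
      rfl

/-- eventual correctness of the output, when all degrees are positive -/
lemma y_eventually
    (hf : ∀ m, 0 < m → ∀ (z : Fin m → Fin K) (v : Fin K),
      ((f m z : Fin K → ℚ) v) = ((Finset.univ.filter fun i => z i = v).card : ℚ) / m)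
    (hd : ∀ i : Fin n, 0 < N.deg i) (hn : 0 < n) :
    ∃ T, ∀ t, T ≤ t → ∀ i, yAt f N x t i = f n x := by
  obtain ⟨k₀, hk₀⟩ := exists_stable N x
  obtain ⟨R, hR⟩ := exists_ball_all N hn
  obtain ⟨T, hT⟩ := live f N x hd (2 * (max (max k₀ R) 1) + 1)
  refine ⟨T + 1, fun t ht i => ?_⟩
  obtain ⟨t', rfl⟩ : ∃ t', t = t' + 1 := ⟨t - 1, by omega⟩
  rw [yAt_succ, computeY, if_neg (by have := hd i; omega : ¬ N.deg i = 0)]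
  have hK : 0 < K := by have := (x i).isLt; omega
  rw [dif_pos hK]
  have hLv : 2 * (max (max k₀ R) 1) + 1 ≤ ownLevels (N.deg i) (datAt f N x (t'+1) i) :=
    hT (t'+1) (by omega) i
  have hkk : 1 ≤ (ownLevels (N.deg i) (datAt f N x (t'+1) i) - 1) / 2 := by omega
  rw [if_pos hkk]
  have hstar : max (max k₀ R) 1 ≤ (ownLevels (N.deg i) (datAt f N x (t'+1) i) - 1) / 2 := by
    omega
  have h2kk : 2 * ((ownLevels (N.deg i) (datAt f N x (t'+1) i) - 1) / 2)
      < ownLevels (N.deg i) (datAt f N x (t'+1) i) := by omega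
  rw [ownView_correct N x (GoodDat.getD f N x (run_invariant f N x (t'+1)).1 i) _ h2kk]
  rw [show 2 * ((ownLevels (N.deg i) (datAt f N x (t'+1) i) - 1) / 2)
      = ((ownLevels (N.deg i) (datAt f N x (t'+1) i) - 1) / 2)
        + ((ownLevels (N.deg i) (datAt f N x (t'+1) i) - 1) / 2) from by omega]
  rw [ExtF_univ (fun j => ball_mono' N (by omega : R ≤ _) i (hR i j))]
  exact outOf_eq f N x hf (stable_mono N x hk₀ (by omega)) hn hK

end Run4

end Freq
/-- the vector of frequencies `(p_1(x),…,p_K(x))`, taking values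
in the countable set `Y = D ∩ ℚ^K`, is computable with infinite memory. -/
theorem freq_vector_computableWithInfiniteMemory (K : ℕ)
    (f : ∀ n, (Fin n → Fin K) →
      {p : Fin K → ℚ // (∀ k, 0 ≤ p k ∧ p k ≤ 1) ∧ ∑ k, p k = 1})
    (hf : ∀ n, 0 < n → ∀ (x : Fin n → Fin K) (k : Fin K),
      ((f n x : Fin K → ℚ) k) = ((Finset.univ.filter fun i => x i = k).card : ℚ) / n) :
    ComputableWithInfiniteMemory f := by
  classical
  refine ⟨Option Bool, Freq.ZT, Freq.algo f, inferInstance, inferInstance,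
    fun d => inferInstance, ?_⟩
  intro n hn N x
  by_cases hd : ∀ i : Fin n, 0 < N.deg i
  · obtain ⟨T, hT⟩ := Freq.y_eventually f N x hf hd hn
    exact ⟨T, fun t ht i => hT t ht i⟩
  · push_neg at hd
    obtain ⟨i, hdi⟩ := hd
    have hdi0 : N.deg i = 0 := by omega
    have huniq : ∀ j : Fin n, j = i := by
      intro j
      rcases (N.connected i j).cases_head with h | ⟨c, hc, _⟩
      · exact h.symm
      · exfalso
        have hpos : 0 < N.deg i := by
          rw [PortNetwork.deg]
          exact Fintype.card_pos_iff.mpr ⟨⟨c, hc⟩⟩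
        omega
    have hn1 : n = 1 := by
      have h1 := Fintype.card_eq_one_iff.mpr ⟨i, huniq⟩
      simpa using h1
    subst hn1
    refine ⟨1, fun t ht i' => ?_⟩
    obtain ⟨t', rfl⟩ : ∃ t', t = t' + 1 := ⟨t - 1, by omega⟩
    have hdi' : N.deg i' = 0 := by rw [Subsingleton.elim i' i]; exact hdi0
    show Freq.yAt f N x (t'+1) i' = f 1 x
    rw [Freq.yAt_succ, Freq.computeY, if_pos hdi']
    congr 1
    funext a
    rw [Subsingleton.elim a i']
end

section
/- Let X = {0,1} and let k ≥ 2 be an integer. The family of functions (f_n : X^n → ℤ/kℤ)_{n≥1} defined by f_n(x_1, …, x_n) = (Σ_{i=1}^n x_i) mod k is not computable with infinite memory. -/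
open Fin.CommRing Fin.NatCast Fin.IntCast

variable {m : ℕ}

def cadj (i j : Fin (m+3)) : Bool := decide (j = i + 1 ∨ j = i - 1)

lemma cadj_iff (i j : Fin (m+3)) : cadj i j = true ↔ (j = i + 1 ∨ j = i - 1) := by
  simp [cadj]

lemma add_one_ne_sub_one (i : Fin (m+3)) : i + 1 ≠ i - 1 := by
  intro h
  have h2 : (2 : Fin (m+3)) = 0 := by
    have := congrArg (fun z => z - i + 1) h
    simp at this
    linear_combination this
  have := congrArg Fin.val h2
  simp [Nat.mod_eq_of_lt (show 2 < m+3 by omega)] at this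

lemma self_ne_add_one (i : Fin (m+3)) : i ≠ i + 1 := by
  intro h
  have h1 : (1 : Fin (m+3)) = 0 := by linear_combination -h
  have := congrArg Fin.val h1
  simp at this

lemma self_ne_sub_one (i : Fin (m+3)) : i ≠ i - 1 := by
  intro h
  have h1 : (1 : Fin (m+3)) = 0 := by linear_combination h
  have := congrArg Fin.val h1
  simp at this

lemma ne_add_two (i : Fin (m+3)) : i ≠ i + 1 + 1 := by
  intro h
  have h2 : (2 : Fin (m+3)) = 0 := by linear_combination -h
  have := congrArg Fin.val h2
  simp [Nat.mod_eq_of_lt (show 2 < m+3 by omega)] at this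

def cycE (i : Fin (m+3)) : {j // cadj i j} ≃ Fin 2 where
  toFun j := if j.1 = i + 1 then 0 else 1
  invFun p := if p = 0 then ⟨i + 1, by simp [cadj]⟩ else ⟨i - 1, by simp [cadj]⟩
  left_inv := by
    rintro ⟨j, hj⟩
    rcases (cadj_iff i j).1 hj with rfl | rfl
    · simp
    · have h1 : (i - 1 : Fin (m+3)) ≠ i + 1 := fun h => add_one_ne_sub_one i h.symm
      simp [h1]
  right_inv p := by
    fin_cases p
    · simp
    · have h1 : (i - 1 : Fin (m+3)) ≠ i + 1 := fun h => add_one_ne_sub_one i h.symm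
      simp [h1]

lemma cyc_deg' (i : Fin (m+3)) : Fintype.card {j // cadj i j} = 2 := by
  rw [Fintype.card_congr (cycE i), Fintype.card_fin]

lemma reach_add (i : Fin (m+3)) (c : ℕ) :
    Relation.ReflTransGen (fun a b => cadj a b = true) i (i + (c : Fin (m+3))) := by
  induction c with
  | zero => simpa using Relation.ReflTransGen.refl
  | succ c ih =>
      have h : (i + ((c+1 : ℕ) : Fin (m+3))) = (i + (c : Fin (m+3))) + 1 := by
        push_cast; ring
      rw [h]
      exact ih.tail (by simp [cadj])

def cyc (m : ℕ) : PortNetwork (m+3) where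
  adj := cadj
  symm := by
    intro i j h
    rcases (cadj_iff i j).1 h with rfl | rfl
    · rw [cadj_iff]; right; rw [add_sub_cancel_right]
    · rw [cadj_iff]; left; rw [sub_add_cancel]
  loopless := by
    intro i h
    rcases (cadj_iff i i).1 h with h' | h'
    · exact self_ne_add_one i h'
    · exact self_ne_sub_one i h'
  connected := by
    intro i j
    have := reach_add i (j - i).val
    rw [Fin.cast_val_eq_self] at this
    have h2 : i + (j - i) = j := by ring
    rwa [h2] at this
  port i := (cycE i).trans (finCongr (cyc_deg' i).symm)

section
variable {Y M : Type} {Z : ℕ → Type}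

def castState {d : ℕ} (h : d = 2) (s : Z 2 × Y × (Fin 2 → M)) :
    Z d × Y × (Fin d → M) :=
  (cast (congrArg Z h.symm) s.1, s.2.1, fun p => s.2.2 (finCongr h p))

def unif (A : Algorithm (Fin 2) Y M Z) : ℕ → Z 2 × Y × (Fin 2 → M)
  | 0 => (A.z0 2, A.y0, fun _ => A.m0)
  | t+1 => A.trans 2 1 (unif A t).1 (unif A t).2.1
      (fun p => if p = 0 then (unif A t).2.2 1 else (unif A t).2.2 0)

lemma cast_z0 (A : Algorithm (Fin 2) Y M Z) {d : ℕ} (h : d = 2) :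
    A.z0 d = cast (congrArg Z h.symm) (A.z0 2) := by subst h; rfl

lemma cast_trans (A : Algorithm (Fin 2) Y M Z) {d : ℕ} (h : d = 2)
    (s : Z 2 × Y × (Fin 2 → M)) :
    A.trans d 1 (castState h s).1 (castState h s).2.1
      (fun k => if finCongr h k = 0 then s.2.2 1 else s.2.2 0)
    = castState h (A.trans 2 1 s.1 s.2.1 (fun p => if p = 0 then s.2.2 1 else s.2.2 0)) := by
  subst h
  simp [castState]

lemma fin2_cases (p : Fin 2) : p = 0 ∨ p = 1 := by
  fin_cases p
  · left; rfl
  · right; rfl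

lemma cyc_port_symm_apply {m : ℕ} (i : Fin (m+3)) (k : Fin ((cyc m).deg i)) :
    ((cyc m).port i).symm k = (cycE i).symm (finCongr (cyc_deg' i) k) := by
  rfl

lemma cyc_port_apply {m : ℕ} (j : Fin (m+3)) (x : {j' // (cyc m).adj j j'}) :
    (cyc m).port j x = finCongr (cyc_deg' j).symm (cycE j x) := rfl

end

lemma cyc_deg {m : ℕ} (i : Fin (m+3)) : (cyc m).deg i = 2 := cyc_deg' i

lemma run_cyc {Y M : Type} {Z : ℕ → Type} (A : Algorithm (Fin 2) Y M Z) (m : ℕ) (t : ℕ) :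
    ∀ i : Fin (m+3), A.run (cyc m) (fun _ => 1) t i = castState (cyc_deg i) (unif A t) := by
  induction t with
  | zero =>
      intro i
      show (A.z0 _, A.y0, fun _ => A.m0) = _
      rw [cast_z0 A (cyc_deg i)]
      rfl
  | succ t ih =>
      intro i
      have harg : ∀ k : Fin ((cyc m).deg i),
          (A.run (cyc m) (fun _ => (1:Fin 2)) t (((cyc m).port i).symm k).1).2.2
            ((cyc m).port (((cyc m).port i).symm k).1
              ⟨i, (cyc m).symm _ _ (((cyc m).port i).symm k).2⟩)
          = (if finCongr (cyc_deg i) k = 0 then (unif A t).2.2 1 else (unif A t).2.2 0) := by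
        intro k
        rcases fin2_cases (finCongr (cyc_deg i) k) with hk | hk
        · have hj : (((cyc m).port i).symm k) = ⟨i+1, by simp [cyc, cadj]⟩ := by
            rw [cyc_port_symm_apply]
            rw [show finCongr (cyc_deg' i) k = 0 from hk]
            rfl
          rw [hj, hk, if_pos rfl]
          have hport : ∀ h' : (cyc m).adj (i+1) i,
              (cyc m).port (i+1) ⟨i, h'⟩ = (finCongr (cyc_deg (i+1))).symm 1 := by
            intro h'
            rw [cyc_port_apply]
            rw [show (finCongr (cyc_deg (i+1))).symm = finCongr (cyc_deg (i+1)).symm from rfl]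
            congr 1
            show (if i = (i+1)+1 then (0:Fin 2) else 1) = 1
            exact if_neg (ne_add_two i)
          rw [hport, ih (i+1)]
          show (unif A t).2.2 (finCongr (cyc_deg (i+1)) ((finCongr (cyc_deg (i+1))).symm 1)) = _
          rw [Equiv.apply_symm_apply]
        · have hj : (((cyc m).port i).symm k) = ⟨i-1, by simp [cyc, cadj]⟩ := by
            rw [cyc_port_symm_apply]
            rw [show finCongr (cyc_deg' i) k = 1 from hk]
            rfl
          rw [hj, hk, if_neg one_ne_zero]
          have hport : ∀ h' : (cyc m).adj (i-1) i,
              (cyc m).port (i-1) ⟨i, h'⟩ = (finCongr (cyc_deg (i-1))).symm 0 := by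
            intro h'
            rw [cyc_port_apply]
            rw [show (finCongr (cyc_deg (i-1))).symm = finCongr (cyc_deg (i-1)).symm from rfl]
            congr 1
            show (if i = (i-1)+1 then (0:Fin 2) else 1) = 0
            rw [if_pos (by rw [sub_add_cancel])]
          rw [hport, ih (i-1)]
          show (unif A t).2.2 (finCongr (cyc_deg (i-1)) ((finCongr (cyc_deg (i-1))).symm 0)) = _
          rw [Equiv.apply_symm_apply]
      have step1 : A.run (cyc m) (fun _ => 1) (t+1) i
          = A.trans ((cyc m).deg i) 1 (A.run (cyc m) (fun _ => 1) t i).1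
              (A.run (cyc m) (fun _ => 1) t i).2.1
              (fun k => if finCongr (cyc_deg i) k = 0 then (unif A t).2.2 1
                        else (unif A t).2.2 0) :=
        congrArg (A.trans _ _ _ _) (funext harg)
      rw [step1, ih i]
      exact cast_trans A _ _

/-- the parity-type function `(Σ_i x_i) mod k` on binary inputs
is not computable with infinite memory. -/
theorem sum_mod_k_not_computable (k : ℕ) (hk : 2 ≤ k) :
    ¬ ComputableWithInfiniteMemory
      (fun n (x : Fin n → Fin 2) => (((∑ i, (x i : ℕ)) : ℕ) : ZMod k)) := by
  rintro ⟨M, Z, A, -, -, -, hcomp⟩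
  obtain ⟨k', rfl⟩ : ∃ k', k = k' + 2 := ⟨k - 2, by omega⟩
  obtain ⟨t1, h1⟩ := hcomp (k'+3) (by omega) (cyc k') (fun _ => 1)
  obtain ⟨t2, h2⟩ := hcomp (k'+4) (by omega) (cyc (k'+1)) (fun _ => 1)
  have e1 := h1 (max t1 t2) (le_max_left _ _) 0
  have e2 := h2 (max t1 t2) (le_max_right _ _) 0
  rw [run_cyc A k' (max t1 t2) 0] at e1
  rw [run_cyc A (k'+1) (max t1 t2) 0] at e2
  have s1 : (∑ _i : Fin (k'+3), ((1:Fin 2):ℕ)) = k'+3 := by simp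
  have s2 : (∑ _i : Fin (k'+4), ((1:Fin 2):ℕ)) = k'+4 := by simp
  simp only [s1] at e1
  simp only [s2] at e2
  have key : ((k'+3:ℕ) : ZMod (k'+2)) = ((k'+4:ℕ) : ZMod (k'+2)) := e1.symm.trans e2
  have h4 : ((k'+4:ℕ) : ZMod (k'+2)) - ((k'+3:ℕ) : ZMod (k'+2)) = 1 := by push_cast; ring
  rw [← key, sub_self] at h4
  haveI : Fact (1 < k' + 2) := ⟨by omega⟩
  exact one_ne_zero h4.symm
end
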